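/- arXiv:1908.11041 — 4 statements merged into one kernel-verified Lean document; each statement's English description precedes it below -/
import Mathlib

section
/- Let n be a positive integer, μ a partition with μ'_1 + μ'_2 ≤ n, λ a partition with at most n parts, and δ an even partition (all parts even) with at most n parts. Suppose ℓ(λ) ≤ n/2. Then every Littlewood-Richardson tableau of shape λ/δ with content μ^π (anti-lattice word condition) automatically satisfies the flag condition: if U is the companion tableau of shape μ^π, with entries τ_1 > ⋯ > τ_q in its second rightmost column (q = μ'_2), and n_j = 2j for 1 ≤ j ≤ q, then τ_j + n_j ≤ n + 1 for all j. -/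
namespace LRPaper

/-- A partition, encoded as a weakly decreasing list of positive integers. -/
def IsPartition (l : List ℕ) : Prop := l.Pairwise (· ≥ ·) ∧ ∀ x ∈ l, 0 < x

/-- The conjugate (transposed) partition, as a list. -/
def conj (l : List ℕ) : List ℕ :=
  (List.range l.headI).map fun i => l.countP fun x => decide (i < x)

/-- The entry of a skew tableau `T` (list of rows, row `i` having the cells
`mu_i ≤ j < lam_i`) in row `i` and (absolute) column `j`. -/
def entry (mu : List ℕ) (T : List (List ℕ)) (i j : ℕ) : ℕ :=
  (T.getD i []).getD (j - mu.getD i 0) 0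

/-- `T` is a semistandard tableau of skew shape `lam/mu` (entries are positive
integers, rows weakly increase, columns strictly increase). -/
def IsSkewSSYT (lam mu : List ℕ) (T : List (List ℕ)) : Prop :=
  T.length = lam.length ∧
  (∀ i, (T.getD i []).length = lam.getD i 0 - mu.getD i 0) ∧
  (∀ r ∈ T, ∀ x ∈ r, 0 < x) ∧
  (∀ r ∈ T, r.Pairwise (· ≤ ·)) ∧
  (∀ i j, mu.getD i 0 ≤ j → mu.getD (i+1) 0 ≤ j → j < lam.getD (i+1) 0 →
    entry mu T i j < entry mu T (i+1) j)

/-- The number of occurrences of `k` among the entries of `T`. -/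
def content (T : List (List ℕ)) (k : ℕ) : ℕ := T.flatten.count k

/-- `T` has content `nu` : the letter `k+1` occurs `nu_{k+1}` times. -/
def HasContent (nu : List ℕ) (T : List (List ℕ)) : Prop :=
  ∀ k, content T (k+1) = nu.getD k 0

/-- The reverse reading word: each row right-to-left, rows top-to-bottom. -/
def rwordRev (T : List (List ℕ)) : List ℕ := (T.map List.reverse).flatten

/-- The column reading word `w(T)` : columns right-to-left, and from top to
bottom within each column. -/
def colWord (lam mu : List ℕ) (T : List (List ℕ)) : List ℕ :=
  ((List.range lam.headI).reverse.map fun c =>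
    (List.range T.length).filterMap fun i =>
      if mu.getD i 0 ≤ c ∧ c < lam.getD i 0 then some (entry mu T i c) else none).flatten

/-- A lattice word: in every prefix, `i` occurs at least as often as `i+1`. -/
def IsLattice (w : List ℕ) : Prop :=
  ∀ k i, (w.take k).count (i+2) ≤ (w.take k).count (i+1)

/-- An anti-lattice word (for letters bounded by `ℓ`): in every suffix, `i`
occurs at least as often as `i-1`, for `1 < i ≤ ℓ`. -/
def IsAntiLattice (w : List ℕ) (ℓ : ℕ) : Prop :=
  ∀ k i, i + 2 ≤ ℓ → (w.drop k).count (i+1) ≤ (w.drop k).count (i+2)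

/-- A Littlewood–Richardson tableau of shape `lam/mu` and content `nu`. -/
def IsLR (lam mu nu : List ℕ) (T : List (List ℕ)) : Prop :=
  IsSkewSSYT lam mu T ∧ HasContent nu T ∧ IsLattice (rwordRev T)

/-- A Littlewood–Richardson tableau of shape `lam/mu` with content `nu^π`
(the 180° rotation of `nu`): the column reading word is an anti-lattice word
and the letter `i` occurs `nu_{ℓ(nu)+1-i}` times. -/
def IsAntiLR (lam mu nu : List ℕ) (T : List (List ℕ)) : Prop :=
  IsSkewSSYT lam mu T ∧ HasContent nu.reverse T ∧
    IsAntiLattice (colWord lam mu T) nu.length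

/-- Column insertion of `x` into a single column (top-to-bottom list): `x`
replaces the topmost entry `≥ x` (which is bumped to the next column), or is
appended at the bottom. -/
def colInsertCol (x : ℕ) : List ℕ → List ℕ × Option ℕ
  | [] => ([x], none)
  | y :: ys =>
    if x ≤ y then (x :: ys, some y)
    else
      let p := colInsertCol x ys
      (y :: p.1, p.2)

/-- Column insertion of a letter into a tableau presented as its list of
columns (left to right). -/
def colInsert (x : ℕ) : List (List ℕ) → List (List ℕ)
  | [] => [[x]]
  | C :: rest =>
    match colInsertCol x C with
    | (C', none) => C' :: rest
    | (C', some y) => C' :: colInsert y rest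

/-- Column insertion of a word (left to right) into a tableau given by its
columns. -/
def insertWord (w : List ℕ) (C : List (List ℕ)) : List (List ℕ) :=
  w.foldl (fun acc x => colInsert x acc) C

/-- The columns of the superstandard tableau `H_mu` of shape `mu`: the `i`-th
entry from the top of each column is `i`. -/
def Hcols (mu : List ℕ) : List (List ℕ) :=
  (List.range mu.headI).map fun c => (List.range ((conj mu).getD c 0)).map (· + 1)

/-- The outer shape of the rotated diagram `mu^π` (a rectangle of width `mu_1`). -/
def piOuter (mu : List ℕ) : List ℕ := List.replicate mu.length mu.headI

/-- The inner shape of the rotated diagram `mu^π`. -/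
def piInner (mu : List ℕ) : List ℕ :=
  (List.range mu.length).map fun i => mu.headI - mu.getD (mu.length - 1 - i) 0

/-- `S` is (the companion tableau of) an LR tableau in `LR^{lam'}_{delta' mu'}`:
a semistandard tableau of straight shape `mu'` whose column insertion into
`H_{delta'}` yields `H_{lam'}`. -/
def IsCompanion (lam delta mu : List ℕ) (S : List (List ℕ)) : Prop :=
  IsSkewSSYT (conj mu) [] S ∧
    insertWord (colWord (conj mu) [] S) (Hcols (conj delta)) = Hcols (conj lam)

/-- `U` is (the companion tableau of) an LR tableau in `LR^{lam}_{delta mu^π}`: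
a semistandard tableau of shape `mu^π` whose column insertion into `H_delta`
yields `H_lam`. -/
def IsCompanionAnti (lam delta mu : List ℕ) (U : List (List ℕ)) : Prop :=
  IsSkewSSYT (piOuter mu) (piInner mu) U ∧
    insertWord (colWord (piOuter mu) (piInner mu) U) (Hcols delta) = Hcols lam

/-- The `j`-th entry from the bottom of the second rightmost column of a
tableau `U` of shape `mu^π`. -/
def tauEnt (mu : List ℕ) (U : List (List ℕ)) (j : ℕ) : ℕ :=
  entry (piInner mu) U (mu.length - j) (mu.headI - 2)

lemma colInsertCol_count (v x : ℕ) (C : List ℕ) :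
    (colInsertCol x C).1.count v + (colInsertCol x C).2.toList.count v
      = (x :: C).count v := by
  induction C with
  | nil => simp [colInsertCol]
  | cons y ys ih =>
    simp only [colInsertCol]
    split
    · simp [List.count_cons, beq_iff_eq]
      omega
    · rcases hc : colInsertCol x ys with ⟨C', o⟩
      rw [hc] at ih
      simp only [hc]
      cases o <;>
        · simp [List.count_cons, beq_iff_eq] at *
          omega

lemma colInsert_count (v x : ℕ) (Cs : List (List ℕ)) :
    (colInsert x Cs).flatten.count v = (x :: Cs.flatten).count v := by
  induction Cs generalizing x with
  | nil => simp [colInsert]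
  | cons C rest ih =>
    have h := colInsertCol_count v x C
    simp only [colInsert]
    rcases hc : colInsertCol x C with ⟨C', o⟩
    rw [hc] at h
    cases o with
    | none =>
      simp only [Option.toList, List.count_nil] at h
      simp [List.count_append, List.count_cons, beq_iff_eq] at *
      omega
    | some y =>
      simp only [Option.toList, List.count_cons, List.count_nil] at h
      simp [List.count_append, List.count_cons, ih, beq_iff_eq] at *
      omega

lemma insertWord_count (v : ℕ) (w : List ℕ) (C : List (List ℕ)) :
    (insertWord w C).flatten.count v = w.count v + C.flatten.count v := by
  induction w generalizing C with
  | nil => simp [insertWord]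
  | cons a w ih =>
    have h : insertWord (a :: w) C = insertWord w (colInsert a C) := rfl
    rw [h, ih, colInsert_count, List.count_cons]
    simp [List.count_cons, beq_iff_eq]
    omega
lemma getD_map_range (f : ℕ → ℕ) (n i : ℕ) (hi : i < n) :
    ((List.range n).map f).getD i 0 = f i := by
  rw [List.getD_eq_getElem?_getD, List.getElem?_map, List.getElem?_range hi]
  rfl

lemma headI_replicate (n a : ℕ) (h : 0 < n) : (List.replicate n a).headI = a := by
  cases n with
  | zero => omega
  | succ k => simp [List.replicate_succ]

lemma getD_zero_eq_headI (l : List ℕ) : l.getD 0 0 = l.headI := by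
  cases l <;> simp

lemma sorted_getD_le_headI (l : List ℕ) (hs : l.Pairwise (· ≥ ·)) (i : ℕ) :
    l.getD i 0 ≤ l.headI := by
  cases l with
  | nil => simp
  | cons a t =>
    by_cases hi : i < (a :: t).length
    · rw [List.getD_eq_getElem _ _ hi]
      have hmem : (a :: t)[i] ∈ a :: t := List.getElem_mem _
      rcases List.mem_cons.mp hmem with h | h
      · simp [h]
      · exact (List.pairwise_cons.mp hs).1 _ h
    · rw [List.getD_eq_default _ _ (by omega)]
      simp

lemma sorted_countP_lt (l : List ℕ) (hs : l.Pairwise (· ≥ ·)) (i : ℕ)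
    (hi : i < l.countP fun x => decide (1 < x)) : 1 < l.getD i 0 := by
  by_contra hle
  push_neg at hle
  have hil : i < l.length := lt_of_lt_of_le hi (List.countP_le_length)
  have hgd : l.getD i 0 = l[i] := List.getD_eq_getElem _ _ hil
  have hdrop : l.drop i = l[i] :: l.drop (i + 1) := List.drop_eq_getElem_cons hil
  have hsd : (l.drop i).Pairwise (· ≥ ·) := hs.drop
  have hzero : (l.drop i).countP (fun x => decide (1 < x)) = 0 := by
    rw [List.countP_eq_zero]
    intro x hx
    rw [hdrop] at hsd hx
    rcases List.mem_cons.mp hx with rfl | hx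
    · simp only [decide_eq_true_eq]; omega
    · have := (List.pairwise_cons.mp hsd).1 x hx
      simp only [decide_eq_true_eq]; omega
  have hsplit := List.countP_append (l₁ := l.take i) (l₂ := l.drop i)
    (p := fun x => decide (1 < x))
  rw [List.take_append_drop] at hsplit
  have h1 : (l.take i).countP (fun x => decide (1 < x)) ≤ i := by
    calc (l.take i).countP (fun x => decide (1 < x)) ≤ (l.take i).length :=
          List.countP_le_length
      _ ≤ i := by simp [List.length_take]
  omega

lemma mem_Hcols_le (l : List ℕ) (v : ℕ) (hv : v ∈ (Hcols l).flatten) : v ≤ l.length := by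
  rw [List.mem_flatten] at hv
  obtain ⟨col, hcol, hvcol⟩ := hv
  rw [Hcols, List.mem_map] at hcol
  obtain ⟨c, _, rfl⟩ := hcol
  rw [List.mem_map] at hvcol
  obtain ⟨k, hk, rfl⟩ := hvcol
  rw [List.mem_range] at hk
  have h2 : (conj l).getD c 0 ≤ l.length := by
    rcases lt_or_ge c l.headI with h | h
    · rw [conj, getD_map_range _ _ _ h]; exact List.countP_le_length
    · rw [conj, List.getD_eq_default _ _ (by simpa using h)]
      exact Nat.zero_le _
  omega

lemma entry_mem_colWord (lam mu : List ℕ) (T : List (List ℕ)) (i c : ℕ)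
    (hi : i < T.length) (hc : c < lam.headI)
    (h1 : mu.getD i 0 ≤ c) (h2 : c < lam.getD i 0) :
    entry mu T i c ∈ colWord lam mu T := by
  rw [colWord, List.mem_flatten]
  refine ⟨(List.range T.length).filterMap fun i' =>
      if mu.getD i' 0 ≤ c ∧ c < lam.getD i' 0 then some (entry mu T i' c) else none,
    List.mem_map_of_mem (by simp [List.mem_reverse, List.mem_range, hc] : c ∈ (List.range lam.headI).reverse), ?_⟩
  rw [List.mem_filterMap]
  exact ⟨i, by simp [List.mem_range, hi], by rw [if_pos ⟨h1, h2⟩]⟩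
/-- In the stable range `ℓ(λ) ≤ n/2`, every
Littlewood–Richardson tableau of shape `λ/δ` with content `μ^π` (i.e. every
companion tableau `U` of shape `μ^π` with `(U → H_δ) = H_λ`) automatically
satisfies the flag condition: with `q = μ'_2`, `n_j = 2j`, the entries
`τ_1 > ⋯ > τ_q` of the second rightmost column of `U` (read from the bottom)
satisfy `τ_j + n_j ≤ n + 1` for all `1 ≤ j ≤ q`. -/
theorem flag_condition_automatic_in_stable_range
    (n : ℕ) (hn : 0 < n) (mu lam delta : List ℕ)
    (hmu : IsPartition mu) (hmuO : (conj mu).headI + (conj mu).getD 1 0 ≤ n)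
    (hlam : IsPartition lam) (hlamlen : lam.length ≤ n)
    (hstable : 2 * lam.length ≤ n)
    (hdelta : IsPartition delta) (hdeltalen : delta.length ≤ n)
    (hdeltaeven : ∀ x ∈ delta, 2 ∣ x)
    (U : List (List ℕ)) (hU : IsCompanionAnti lam delta mu U) :
    ∀ j, 1 ≤ j → j ≤ (conj mu).getD 1 0 → tauEnt mu U j + 2 * j ≤ n + 1 := by
  intro j hj1 hjq
  obtain ⟨⟨hUlen, hrowlen, hpos, _, hcol⟩, hins⟩ := hU
  have hsorted := hmu.1
  -- basic facts about μ
  have hm2 : 2 ≤ mu.headI := by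
    by_contra h
    push_neg at h
    have h0 : (conj mu).getD 1 0 = 0 := by
      apply List.getD_eq_default
      simp only [conj, List.length_map, List.length_range]
      omega
    omega
  have hq : (conj mu).getD 1 0 = mu.countP fun x => decide (1 < x) := by
    rw [conj, getD_map_range _ _ _ (by omega)]
  have hqL : (conj mu).getD 1 0 ≤ mu.length := by
    rw [hq]; exact List.countP_le_length
  have hjL : j ≤ mu.length := le_trans hjq hqL
  have hL0 : 0 < mu.length := by omega
  have h2le : ∀ k, k < (conj mu).getD 1 0 → 2 ≤ mu.getD k 0 := by
    intro k hk
    rw [hq] at hk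
    have := sorted_countP_lt mu hsorted k hk
    omega
  have hlem : ∀ k, mu.getD k 0 ≤ mu.headI :=
    fun k => sorted_getD_le_headI mu hsorted k
  have hULen : U.length = mu.length := by
    simpa [piOuter] using hUlen
  have hinner : ∀ i, i < mu.length →
      (piInner mu).getD i 0 = mu.headI - mu.getD (mu.length - 1 - i) 0 := by
    intro i hi
    rw [piInner, getD_map_range _ _ _ hi]
  have houter : ∀ i, i < mu.length → (piOuter mu).getD i 0 = mu.headI := by
    intro i hi
    rw [piOuter, List.getD_eq_getElem _ _ (by simpa using hi)]
    simp
  have hrl : ∀ i, i < mu.length →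
      (U.getD i []).length = mu.getD (mu.length - 1 - i) 0 := by
    intro i hi
    rw [hrowlen i, houter i hi, hinner i hi]
    have := hlem (mu.length - 1 - i)
    omega
  -- the entry formula for τ_k
  have htau : ∀ k, 1 ≤ k → k ≤ (conj mu).getD 1 0 →
      tauEnt mu U k = (U.getD (mu.length - k) []).getD (mu.getD (k - 1) 0 - 2) 0 := by
    intro k hk1 hkq
    have hkL : k ≤ mu.length := le_trans hkq hqL
    have hidx : mu.length - 1 - (mu.length - k) = k - 1 := by omega
    rw [tauEnt, entry, hinner (mu.length - k) (by omega), hidx]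
    congr 1
    have := hlem (k - 1)
    have := h2le (k - 1) (by omega)
    omega
  -- positivity of τ_k
  have hposk : ∀ k, 1 ≤ k → k ≤ (conj mu).getD 1 0 → 1 ≤ tauEnt mu U k := by
    intro k hk1 hkq
    have hkL : k ≤ mu.length := le_trans hkq hqL
    rw [htau k hk1 hkq]
    have hrow : (U.getD (mu.length - k) []).length = mu.getD (k - 1) 0 := by
      rw [hrl (mu.length - k) (by omega)]
      congr 1
      omega
    have hA2 := h2le (k - 1) (by omega)
    have hidx : mu.getD (k - 1) 0 - 2 < (U.getD (mu.length - k) []).length := by omega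
    rw [List.getD_eq_getElem _ _ hidx]
    have hrmem : U.getD (mu.length - k) [] ∈ U := by
      rw [List.getD_eq_getElem _ _ (show mu.length - k < U.length by omega)]
      exact List.getElem_mem _
    exact hpos _ hrmem _ (List.getElem_mem _)
  -- strict decrease up the column
  have hstep : ∀ k, 1 ≤ k → k + 1 ≤ (conj mu).getD 1 0 →
      tauEnt mu U (k + 1) < tauEnt mu U k := by
    intro k hk1 hkq
    have hkL : k + 1 ≤ mu.length := le_trans hkq hqL
    have heq : mu.length - (k + 1) + 1 = mu.length - k := by omega
    have hA1 := h2le k (by omega)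
    have hA2 := h2le (k - 1) (by omega)
    have hB1 := hlem k
    have hB2 := hlem (k - 1)
    have h := hcol (mu.length - (k + 1)) (mu.headI - 2) ?_ ?_ ?_
    · rw [heq] at h
      exact h
    · rw [hinner (mu.length - (k + 1)) (by omega)]
      have hidx : mu.length - 1 - (mu.length - (k + 1)) = k := by omega
      rw [hidx]
      omega
    · rw [heq, hinner (mu.length - k) (by omega)]
      have hidx : mu.length - 1 - (mu.length - k) = k - 1 := by omega
      rw [hidx]
      omega
    · rw [heq, houter (mu.length - k) (by omega)]
      omega
  -- chain: τ_k + (k-1) ≤ τ_1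
  have hchain : ∀ k, 1 ≤ k → k ≤ (conj mu).getD 1 0 →
      tauEnt mu U k + (k - 1) ≤ tauEnt mu U 1 := by
    intro k
    induction k with
    | zero => omega
    | succ k ih =>
      intro _ hkq
      by_cases hk0 : k = 0
      · subst hk0; simp
      · have h1 := ih (by omega) (by omega)
        have h2 := hstep k (by omega) hkq
        omega
  -- τ_1 appears in the column word
  have hmem : tauEnt mu U 1 ∈ colWord (piOuter mu) (piInner mu) U := by
    rw [tauEnt]
    apply entry_mem_colWord
    · omega
    · rw [piOuter, headI_replicate _ _ hL0]
      omega
    · rw [hinner (mu.length - 1) (by omega)]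
      have hidx : mu.length - 1 - (mu.length - 1) = 0 := by omega
      rw [hidx, getD_zero_eq_headI]
      omega
    · rw [houter (mu.length - 1) (by omega)]
      omega
  -- τ_1 ≤ ℓ(λ)
  have htop : tauEnt mu U 1 ≤ lam.length := by
    apply mem_Hcols_le
    have hcount := insertWord_count (tauEnt mu U 1)
      (colWord (piOuter mu) (piInner mu) U) (Hcols delta)
    rw [hins] at hcount
    have hpos1 : 0 < (colWord (piOuter mu) (piInner mu) U).count (tauEnt mu U 1) :=
      List.count_pos_iff.mpr hmem
    have : 0 < (Hcols lam).flatten.count (tauEnt mu U 1) := by omega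
    exact List.count_pos_iff.mp this
  have hch := hchain j hj1 hjq
  have hpj := hposk j hj1 hjq
  omega

end LRPaper
end

section
/- Let U be a semistandard tableau of shape λ(a,b,c) = (2^{b+c},1^a)/(1^b) with entries in ℕ, consisting of left column U^L and right column U^R. Suppose r_U = 0 (the right column cannot be slid down while preserving semistandardness). If a > 0, then applying jeu de taquin to the position below the bottom of U^R yields a semistandard tableau of shape λ(a-1, b+1, c); if b > 0, applying jeu de taquin to the position above the top of U^L yields a semistandard tableau of shape λ(a+1, b-1, c). -/
namespace LRPaper

/-- The `i`-th entry (1-based) of a column, counted from the bottom. -/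
def ent (U : List ℕ) (i : ℕ) : ℕ := U.getD (U.length - i) 0

/-- A two-column filling of the skew shape `λ(a,b,c) = (2^{b+c},1^a)/(1^b)`:
`L` is the left column (read top to bottom, of length `a+c`) and `R` is the
right column (of length `b+c`); the two columns overlap in `c` rows and the
bottom `a` entries of `L` form the tail. -/
structure TwoCol where
  a : ℕ
  b : ℕ
  c : ℕ
  L : List ℕ
  R : List ℕ

instance : Inhabited TwoCol := ⟨⟨0, 0, 0, [], []⟩⟩

/-- Sliding the right column down by `k` positions produces a filling of
`λ(a-k,b-k,c+k)`; `SlideOK T k` says that this filling has weakly increasing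
rows (the columns being unchanged). -/
def SlideOK (T : TwoCol) (k : ℕ) : Prop :=
  ∀ i < T.c + k, T.L.getD i 0 ≤ T.R.getD (T.b - k + i) 0

instance (T : TwoCol) : DecidablePred (SlideOK T) := by
  unfold SlideOK; infer_instance

/-- `T` is a semistandard filling of the two-column shape `λ(a,b,c)` with
entries in `ℕ_{>0}`. -/
def TC.Valid (T : TwoCol) : Prop :=
  T.L.length = T.a + T.c ∧ T.R.length = T.b + T.c ∧
  T.L.Chain' (· < ·) ∧ T.R.Chain' (· < ·) ∧
  (∀ x ∈ T.L, 0 < x) ∧ (∀ x ∈ T.R, 0 < x) ∧ SlideOK T 0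

/-- `𝔯_T`: the maximal `k ≤ min{a,b}` such that sliding the right column down
by `k` positions yields a semistandard filling. -/
def resid (T : TwoCol) : ℕ :=
  Nat.findGreatest (fun k => SlideOK T k) (min T.a T.b)

/-- The column reading word `w(T)` of a two-column tableau (right column
first, each read top to bottom). -/
def TC.word (T : TwoCol) : List ℕ := T.R ++ T.L

/-- Knuth equivalence of words, via equality of the column-insertion
tableaux. -/
def KnuthEq (v w : List ℕ) : Prop := insertWord v [] = insertWord w []

set_option linter.dupNamespace false

/-! ### getD helpers -/

lemma jdx_getD_take {l : List ℕ} {n i : ℕ} (h : i < n) (d : ℕ) :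
    (l.take n).getD i d = l.getD i d := by
  rw [List.getD_eq_getElem?_getD, List.getD_eq_getElem?_getD, List.getElem?_take, if_pos h]

lemma jdx_getD_drop (l : List ℕ) (n i d : ℕ) :
    (l.drop n).getD i d = l.getD (n + i) d := by
  rw [List.getD_eq_getElem?_getD, List.getD_eq_getElem?_getD, List.getElem?_drop]

lemma jdx_chain_getD_lt {l : List ℕ} (h : l.Chain' (· < ·)) {i k : ℕ}
    (hik : i < k) (hk : k < l.length) (d : ℕ) : l.getD i d < l.getD k d := by
  rw [List.getD_eq_getElem _ _ (lt_trans hik hk), List.getD_eq_getElem _ _ hk]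
  exact List.pairwise_iff_getElem.mp (List.isChain_iff_pairwise.mp h) i k _ hk hik

lemma jdx_chain_getD_le {l : List ℕ} (h : l.Chain' (· < ·)) {i k : ℕ}
    (hik : i ≤ k) (hk : k < l.length) (d : ℕ) : l.getD i d ≤ l.getD k d := by
  rcases Nat.lt_or_ge i k with h' | h'
  · exact le_of_lt (jdx_chain_getD_lt h h' hk d)
  · have : i = k := le_antisymm hik h'
    rw [this]

lemma jdx_mem_take_lt {l : List ℕ} (h : l.Chain' (· < ·)) {n : ℕ} (hn : n < l.length) :
    ∀ y ∈ l.take n, y < l.getD n 0 := by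
  intro y hy
  obtain ⟨i, hi, rfl⟩ := List.mem_iff_getElem.mp hy
  have hin : i < n := lt_of_lt_of_le hi (by simp [List.length_take])
  rw [List.getElem_take, ← List.getD_eq_getElem l 0 (lt_trans hin hn)]
  exact jdx_chain_getD_lt h hin hn 0

lemma jdx_insertIdx_eq (x : ℕ) : ∀ (n : ℕ) (l : List ℕ), n ≤ l.length →
    l.insertIdx n x = l.take n ++ x :: l.drop n
  | 0, l, _ => by simp
  | n+1, [], h => by simp at h
  | n+1, y :: l, h => by
    rw [List.insertIdx_succ_cons, jdx_insertIdx_eq x n l (Nat.le_of_succ_le_succ h)]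
    simp

lemma jdx_len_take {l : List ℕ} {n : ℕ} (hn : n ≤ l.length) : (l.take n).length = n := by
  simp [List.length_take]; omega

lemma jdx_getD_insertIdx_lt {l : List ℕ} {n k : ℕ} (x : ℕ) (hn : n ≤ l.length) (hk : k < n) :
    (l.insertIdx n x).getD k 0 = l.getD k 0 := by
  have h5 : k < (l.take n).length := by rw [jdx_len_take hn]; exact hk
  rw [jdx_insertIdx_eq x n l hn, List.getD_append _ _ _ _ h5, jdx_getD_take hk]

lemma jdx_getD_insertIdx_self {l : List ℕ} {n : ℕ} (x : ℕ) (hn : n ≤ l.length) :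
    (l.insertIdx n x).getD n 0 = x := by
  have h5 : (l.take n).length ≤ n := by rw [jdx_len_take hn]
  rw [jdx_insertIdx_eq x n l hn, List.getD_append_right _ _ _ _ h5, jdx_len_take hn]
  simp

lemma jdx_getD_insertIdx_gt {l : List ℕ} {n k : ℕ} (x : ℕ) (hn : n ≤ l.length) (hk : n < k) :
    (l.insertIdx n x).getD k 0 = l.getD (k - 1) 0 := by
  have h5 : (l.take n).length ≤ k := by rw [jdx_len_take hn]; omega
  rw [jdx_insertIdx_eq x n l hn, List.getD_append_right _ _ _ _ h5, jdx_len_take hn]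
  obtain ⟨s, hs⟩ : ∃ s, k - n = s + 1 := ⟨k - n - 1, by omega⟩
  rw [hs]
  show (l.drop n).getD s 0 = _
  rw [jdx_getD_drop]
  congr 1
  omega

lemma jdx_getD_eraseIdx_lt {l : List ℕ} {n k : ℕ} (hk : k < n) :
    (l.eraseIdx n).getD k 0 = l.getD k 0 := by
  rw [List.eraseIdx_eq_take_drop_succ]
  rcases Nat.lt_or_ge k l.length with h | h
  · have h5 : k < (l.take n).length := by simp [List.length_take]; omega
    rw [List.getD_append _ _ _ _ h5, jdx_getD_take hk]
  · rw [List.getD_eq_default _ _ (by simp [List.length_take]; omega),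
      List.getD_eq_default _ _ h]

lemma jdx_getD_eraseIdx_ge {l : List ℕ} {n k : ℕ} (hk : n ≤ k) :
    (l.eraseIdx n).getD k 0 = l.getD (k + 1) 0 := by
  rcases Nat.lt_or_ge n l.length with h | h
  · have h5 : (l.take n).length ≤ k := by simp [List.length_take]; omega
    rw [List.eraseIdx_eq_take_drop_succ, List.getD_append_right _ _ _ _ h5,
      jdx_len_take (le_of_lt h), jdx_getD_drop]
    congr 1
    omega
  · rw [List.eraseIdx_of_length_le h, List.getD_eq_default _ _ (by omega),
      List.getD_eq_default _ _ (by omega)]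

lemma jdx_eraseIdx_insertIdx {l : List ℕ} {n : ℕ} (hn : n < l.length) :
    (l.eraseIdx n).insertIdx n (l.getD n 0) = l := by
  rw [List.eraseIdx_eq_take_drop_succ,
    jdx_insertIdx_eq _ n _ (by simp [List.length_take]; omega)]
  have h1 : (l.take n ++ l.drop (n+1)).take n = l.take n := by
    have := List.take_left (l₁ := l.take n) (l₂ := l.drop (n+1))
    rwa [jdx_len_take (le_of_lt hn)] at this
  have h2 : (l.take n ++ l.drop (n+1)).drop n = l.drop (n+1) := by
    have := List.drop_left (l₁ := l.take n) (l₂ := l.drop (n+1))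
    rwa [jdx_len_take (le_of_lt hn)] at this
  rw [h1, h2]
  conv_rhs => rw [← List.take_append_drop n l]
  congr 1
  rw [List.drop_eq_getElem_cons hn, List.getD_eq_getElem l 0 hn]

/-! ### colInsertCol / colInsert basics -/

lemma colInsertCol_append_of_lt {x : ℕ} : ∀ {C : List ℕ}, (∀ y ∈ C, y < x) →
    colInsertCol x C = (C ++ [x], none)
  | [], _ => rfl
  | y :: C, h => by
    have hy : ¬ x ≤ y := not_le.mpr (h y (List.mem_cons_self))
    have ih := colInsertCol_append_of_lt (fun z hz => h z (List.mem_cons_of_mem _ hz))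
    simp [colInsertCol, if_neg hy, ih]

lemma colInsertCol_boundary {x z : ℕ} : ∀ {Q : List ℕ} (T : List ℕ), (∀ y ∈ Q, y < x) →
    x ≤ z → colInsertCol x (Q ++ z :: T) = (Q ++ x :: T, some z)
  | [], T, _, hxz => by simp [colInsertCol, hxz]
  | y :: Q, T, h, hxz => by
    have hy : ¬ x ≤ y := not_le.mpr (h y (List.mem_cons_self))
    have ih := colInsertCol_boundary (Q := Q) T (fun w hw => h w (List.mem_cons_of_mem _ hw)) hxz
    simp [colInsertCol, if_neg hy, ih]

lemma colInsertCol_prefix {x : ℕ} : ∀ {C₁ : List ℕ}, (∃ y ∈ C₁, x ≤ y) →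
    ∃ C₁' z, (∀ w ∈ C₁', w ∈ C₁ ∨ w = x) ∧
      ∀ C₂, colInsertCol x (C₁ ++ C₂) = (C₁' ++ C₂, some z)
  | [], h => by simp at h
  | y :: C, h => by
    by_cases hxy : x ≤ y
    · refine ⟨x :: C, y, ?_, fun C₂ => by simp [colInsertCol, hxy]⟩
      intro w hw
      rcases List.mem_cons.mp hw with h1 | h1
      · exact Or.inr h1
      · exact Or.inl (List.mem_cons_of_mem _ h1)
    · have h' : ∃ z ∈ C, x ≤ z := by
        obtain ⟨z, hz, hxz⟩ := h
        rcases List.mem_cons.mp hz with rfl | hz'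
        · exact absurd hxz hxy
        · exact ⟨z, hz', hxz⟩
      obtain ⟨C', z, hmem, happ⟩ := colInsertCol_prefix h'
      refine ⟨y :: C', z, ?_, fun C₂ => ?_⟩
      · intro w hw
        rcases List.mem_cons.mp hw with rfl | hw'
        · exact Or.inl (List.mem_cons_self)
        · rcases hmem w hw' with h1 | h1
          · exact Or.inl (List.mem_cons_of_mem _ h1)
          · exact Or.inr h1
      · simp [colInsertCol, if_neg hxy, happ C₂]

lemma colInsert_of_none {x : ℕ} {C C' : List ℕ} {rest : List (List ℕ)}
    (h : colInsertCol x C = (C', none)) : colInsert x (C :: rest) = C' :: rest := by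
  simp only [colInsert, h]

lemma colInsert_of_some {x z : ℕ} {C C' : List ℕ} {rest : List (List ℕ)}
    (h : colInsertCol x C = (C', some z)) :
    colInsert x (C :: rest) = C' :: colInsert z rest := by
  simp only [colInsert, h]

lemma insertWord_nil (s : List (List ℕ)) : insertWord [] s = s := rfl

lemma insertWord_cons (x : ℕ) (w : List ℕ) (s : List (List ℕ)) :
    insertWord (x :: w) s = insertWord w (colInsert x s) := rfl

lemma insertWord_append (u v : List ℕ) (s : List (List ℕ)) :
    insertWord (u ++ v) s = insertWord v (insertWord u s) :=
  List.foldl_append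

lemma insertWord_chain_aux : ∀ (w C : List ℕ), w.Chain' (· < ·) →
    (∀ y ∈ C, ∀ z ∈ w, y < z) → insertWord w [C] = [C ++ w]
  | [], C, _, _ => by simp [insertWord_nil]
  | z :: w, C, hch, h => by
    have h1 : colInsertCol z C = (C ++ [z], none) :=
      colInsertCol_append_of_lt (fun y hy => h y hy z (List.mem_cons_self))
    have hzw : ∀ u ∈ w, z < u :=
      (List.pairwise_cons.mp (List.isChain_iff_pairwise.mp hch)).1
    rw [insertWord_cons, colInsert_of_none h1,
      insertWord_chain_aux w (C ++ [z]) hch.tail ?_]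
    · simp
    · intro y hy u hu
      rcases List.mem_append.mp hy with h2 | h2
      · exact h y h2 u (List.mem_cons_of_mem _ hu)
      · have : y = z := by simpa using h2
        exact this ▸ hzw u hu

lemma insertWord_of_chain {w : List ℕ} (hw : w.Chain' (· < ·)) (hne : w ≠ []) :
    insertWord w [] = [w] := by
  cases w with
  | nil => exact absurd rfl hne
  | cons r w0 =>
    have hrw : ∀ u ∈ w0, r < u :=
      (List.pairwise_cons.mp (List.isChain_iff_pairwise.mp hw)).1
    rw [insertWord_cons]
    have h0 : colInsert r [] = [[r]] := rfl
    rw [h0, insertWord_chain_aux w0 [r] hw.tail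
      (by intro y hy u hu; simp only [List.mem_singleton] at hy; subst hy; exact hrw u hu)]
    simp

/-! ### the two simulation phases -/

lemma jdx_phase1 : ∀ (L1 Q S T : List ℕ) (rest : List (List ℕ)) (x : ℕ),
    L1.length ≤ S.length →
    (∀ y ∈ Q, y < x) → (∀ y ∈ S, y < x) → (∀ z ∈ L1, z < x) →
    (∀ i, i < L1.length → L1.getD i 0 ≤ S.getD i 0) →
    ∃ Q' rest', (∀ y ∈ Q', y < x) ∧
      insertWord L1 ((Q ++ (S ++ T)) :: rest) = (Q' ++ (S.drop L1.length ++ T)) :: rest' ∧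
      insertWord L1 ((Q ++ (S ++ x :: T)) :: rest) = (Q' ++ (S.drop L1.length ++ x :: T)) :: rest'
  | [], Q, S, T, rest, x, _, hQ, _, _, _ =>
    ⟨Q, rest, hQ, by simp [insertWord_nil], by simp [insertWord_nil]⟩
  | l :: L1', Q, S, T, rest, x, hlen, hQ, hS, hL1, hcmp => by
    cases S with
    | nil => simp at hlen
    | cons s S' =>
      have hls : l ≤ s := by
        have := hcmp 0 (by simp)
        simpa using this
      obtain ⟨C₁', z, hmem, happ⟩ :=
        colInsertCol_prefix (C₁ := Q ++ [s]) ⟨s, by simp, hls⟩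
      have hC₁'x : ∀ y ∈ C₁', y < x := by
        intro y hy
        rcases hmem y hy with h1 | h1
        · rcases List.mem_append.mp h1 with h2 | h2
          · exact hQ y h2
          · have : y = s := by simpa using h2
            exact this ▸ hS s (List.mem_cons_self)
        · exact h1 ▸ hL1 l (List.mem_cons_self)
      obtain ⟨Q', rest', hQ'x, hA, hB⟩ :=
        jdx_phase1 L1' C₁' S' T (colInsert z rest) x
          (by simpa using Nat.le_of_succ_le_succ hlen)
          hC₁'x (fun y hy => hS y (List.mem_cons_of_mem _ hy))
          (fun y hy => hL1 y (List.mem_cons_of_mem _ hy))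
          (fun i hi => by simpa using hcmp (i+1) (by simpa using Nat.succ_lt_succ hi))
      refine ⟨Q', rest', hQ'x, ?_, ?_⟩
      · have hcol : Q ++ ((s :: S') ++ T) = (Q ++ [s]) ++ (S' ++ T) := by simp
        rw [insertWord_cons, hcol, colInsert_of_some (happ (S' ++ T))]
        simpa using hA
      · have hcol : Q ++ ((s :: S') ++ x :: T) = (Q ++ [s]) ++ (S' ++ x :: T) := by simp
        rw [insertWord_cons, hcol, colInsert_of_some (happ (S' ++ x :: T))]
        simpa using hB

lemma jdx_phase2 : ∀ (L2 T Q : List ℕ) (z : ℕ) (restB : List (List ℕ)) (Lr : List ℕ),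
    L2.length = T.length + 1 →
    (∀ t, t < L2.length → L2.getD t 0 ≤ (z :: T).getD t 0) →
    (∀ y ∈ Q, ∀ l ∈ L2, y < l) →
    L2.Chain' (· < ·) → (z :: T).Chain' (· < ·) →
    insertWord (L2 ++ Lr) ((Q ++ T) :: colInsert z restB) =
      insertWord (L2 ++ Lr) ((Q ++ z :: T) :: restB)
  | [], T, Q, z, restB, Lr, hlen, _, _, _, _ => by simp at hlen
  | l :: L2', T, Q, z, restB, Lr, hlen, hcmp, hQ, hchL, hchT => by
    have hlz : l ≤ z := by simpa using hcmp 0 (by simp)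
    have hQl : ∀ y ∈ Q, y < l := fun y hy => hQ y hy l (List.mem_cons_self)
    cases T with
    | nil =>
      have hL2' : L2' = [] := List.length_eq_zero_iff.mp (by simpa using hlen)
      subst hL2'
      rw [List.cons_append, insertWord_cons, insertWord_cons]
      have e1 : colInsert l ((Q ++ ([] : List ℕ)) :: colInsert z restB)
          = (Q ++ [l]) :: colInsert z restB := by
        rw [colInsert_of_none (colInsertCol_append_of_lt (by simpa using hQl))]
        simp
      have e2 : colInsert l ((Q ++ [z]) :: restB) = (Q ++ [l]) :: colInsert z restB :=
        colInsert_of_some (colInsertCol_boundary [] hQl hlz)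
      rw [e1, e2]
    | cons z' T' =>
      have hzz' : z < z' := List.rel_of_chain_cons hchT
      have hlz' : l ≤ z' := le_of_lt (lt_of_le_of_lt hlz hzz')
      rw [List.cons_append, insertWord_cons, insertWord_cons]
      have e1 : colInsert l ((Q ++ z' :: T') :: colInsert z restB)
          = (Q ++ l :: T') :: colInsert z' (colInsert z restB) :=
        colInsert_of_some (colInsertCol_boundary T' hQl hlz')
      have e2 : colInsert l ((Q ++ z :: z' :: T') :: restB)
          = (Q ++ l :: z' :: T') :: colInsert z restB :=
        colInsert_of_some (colInsertCol_boundary (z' :: T') hQl hlz)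
      rw [e1, e2]
      have hQl' : ∀ y ∈ Q ++ [l], ∀ u ∈ L2', y < u := by
        intro y hy u hu
        rcases List.mem_append.mp hy with h1 | h1
        · exact hQ y h1 u (List.mem_cons_of_mem _ hu)
        · have : y = l := by simpa using h1
          subst this
          exact (List.pairwise_cons.mp (List.isChain_iff_pairwise.mp hchL)).1 u hu
      have ih := jdx_phase2 L2' T' (Q ++ [l]) z' (colInsert z restB) Lr
        (by simpa using hlen)
        (fun t ht => by simpa using hcmp (t+1) (by simpa using Nat.succ_lt_succ ht))
        hQl' hchL.tail hchT.tail
      have r1 : (Q ++ [l]) ++ T' = Q ++ l :: T' := by simp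
      have r2 : (Q ++ [l]) ++ z' :: T' = Q ++ l :: z' :: T' := by simp
      rw [r1, r2] at ih
      exact ih

lemma jdx_chain_insert_mid {l : List ℕ} (hl : l.Chain' (· < ·)) {m x : ℕ} (hm : m ≤ l.length)
    (h1 : ∀ y ∈ l.take m, y < x) (h2 : m < l.length → x < l.getD m 0) :
    (l.take m ++ x :: l.drop m).Chain' (· < ·) := by
  rw [List.Chain', List.isChain_append]
  refine ⟨hl.sublist (List.take_sublist _ _), ?_, ?_⟩
  · rw [List.isChain_cons]
    refine ⟨?_, hl.sublist (List.drop_sublist _ _)⟩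
    intro y hy
    rw [List.head?_drop] at hy
    rcases Nat.lt_or_ge m l.length with h | h
    · have : l[m]? = some l[m] := List.getElem?_eq_getElem h
      rw [this] at hy
      have : y = l[m] := by simpa using hy.symm
      subst this
      rw [← List.getD_eq_getElem l 0 h]
      exact h2 h
    · rw [List.getElem?_eq_none h] at hy
      simp at hy
  · intro p hp q hq
    have hpmem : p ∈ l.take m := by
      obtain ⟨hne, heq⟩ := List.mem_getLast?_eq_getLast hp
      exact heq ▸ List.getLast_mem hne
    have : q = x := by simpa using hq.symm
    subst this
    exact h1 p hpmem

/-! ### the key insertion-invariance lemma -/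

lemma jdx_key (R L : List ℕ) (m j : ℕ)
    (hR : R.Chain' (· < ·)) (hL : L.Chain' (· < ·))
    (hjm : j ≤ m) (hmR : m ≤ R.length) (hjL : j < L.length)
    (hA : ∀ i, i < j → L.getD i 0 ≤ R.getD (m - j + i) 0)
    (hB : m = 0 ∨ R.getD (m-1) 0 < L.getD j 0)
    (hC : ∀ t, 1 ≤ t → t ≤ R.length - m → L.getD (j+t) 0 ≤ R.getD (m+t-1) 0)
    (hlen : j + (R.length - m) < L.length) :
    insertWord (R ++ L) [] = insertWord (R.insertIdx m (L.getD j 0) ++ L.eraseIdx j) [] := by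
  set x := L.getD j 0 with hx
  rcases eq_or_ne R [] with rfl | hRne
  · have hm0 : m = 0 := le_antisymm (by simpa using hmR) (Nat.zero_le m)
    have hj0 : j = 0 := le_antisymm (hm0 ▸ hjm) (Nat.zero_le j)
    subst hm0; subst hj0
    cases L with
    | nil => simp at hjL
    | cons l L0 =>
      have hxl : x = l := by simp [hx]
      simp [hxl]
  · -- main case
    have hltm : ∀ i, i < m → R.getD i 0 < x := by
      intro i hi
      have hmne : m ≠ 0 := by omega
      exact lt_of_le_of_lt
        (jdx_chain_getD_le hR (show i ≤ m - 1 by omega) (show m - 1 < R.length by omega) 0)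
        (hB.resolve_left hmne)
    set Q : List ℕ := R.take (m - j) with hQdef
    set S : List ℕ := (R.drop (m - j)).take j with hSdef
    set T : List ℕ := R.drop m with hTdef
    set L1 : List ℕ := L.take j with hL1def
    set e : ℕ := R.length - m with hedef
    set L2 : List ℕ := (L.drop (j+1)).take e with hL2def
    set Lr : List ℕ := (L.drop (j+1)).drop e with hLrdef
    have hQS : Q ++ S = R.take m := by
      rw [hQdef, hSdef, ← List.take_add]
      congr 1
      omega
    have hRrep : R = Q ++ (S ++ T) := by
      rw [← List.append_assoc, hQS, hTdef, List.take_append_drop]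
    have hSlen : S.length = j := by
      rw [hSdef, List.length_take, List.length_drop]
      omega
    have hL1len : L1.length = j := by
      rw [hL1def, List.length_take]
      omega
    have hQx : ∀ y ∈ Q, y < x := by
      intro y hy
      obtain ⟨i, hi, rfl⟩ := List.mem_iff_getElem.mp hy
      have him : i < m - j := lt_of_lt_of_le hi (by simp [hQdef, List.length_take])
      rw [← List.getD_eq_getElem Q 0 hi]
      have hv : Q.getD i 0 = R.getD i 0 := by
        rw [hQdef]; exact jdx_getD_take him 0
      rw [hv]
      exact hltm i (by omega)
    have hSx : ∀ y ∈ S, y < x := by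
      intro y hy
      obtain ⟨i, hi, rfl⟩ := List.mem_iff_getElem.mp hy
      have hij : i < j := lt_of_lt_of_le hi (by simp [hSdef, List.length_take])
      rw [← List.getD_eq_getElem S 0 hi]
      have hv : S.getD i 0 = R.getD (m - j + i) 0 := by
        rw [hSdef, jdx_getD_take hij, jdx_getD_drop]
      rw [hv]
      exact hltm _ (by omega)
    have hL1x : ∀ z ∈ L1, z < x := by
      rw [hL1def, hx]
      exact jdx_mem_take_lt hL hjL
    have hcmp1 : ∀ i, i < L1.length → L1.getD i 0 ≤ S.getD i 0 := by
      intro i hi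
      have hij : i < j := by omega
      rw [hL1def, jdx_getD_take hij, hSdef, jdx_getD_take hij, jdx_getD_drop]
      exact hA i hij
    obtain ⟨Q', rest', hQ'x, hstA, hstB⟩ :=
      jdx_phase1 L1 Q S T [] x (by omega) hQx hSx hL1x hcmp1
    have hSdropnil : S.drop L1.length = [] := List.drop_eq_nil_of_le (by omega)
    rw [hSdropnil] at hstA hstB
    -- word decompositions
    have hdropj : L.drop j = x :: L.drop (j+1) := by
      rw [List.drop_eq_getElem_cons hjL]
      congr 1
      rw [hx]
      exact (List.getD_eq_getElem L 0 hjL).symm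
    have hLsplit : L = L1 ++ (x :: (L2 ++ Lr)) := by
      rw [hL2def, hLrdef, List.take_append_drop, hL1def, ← hdropj, List.take_append_drop]
    have hEsplit : L.eraseIdx j = L1 ++ (L2 ++ Lr) := by
      rw [List.eraseIdx_eq_take_drop_succ, hL2def, hLrdef, List.take_append_drop, hL1def]
    -- the new right column
    have hR'rep : R.insertIdx m x = Q ++ (S ++ x :: T) := by
      rw [jdx_insertIdx_eq x m R hmR, ← List.append_assoc, hQS, hTdef]
    have hTmx : ∀ y ∈ R.take m, y < x := by
      rw [← hQS]
      intro y hy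
      rcases List.mem_append.mp hy with h1 | h1
      · exact hQx y h1
      · exact hSx y h1
    have hxRm : m < R.length → x < R.getD m 0 := by
      intro hm
      have he1 : 1 ≤ e := by omega
      have hj1 : j + 1 < L.length := by omega
      have h1 : L.getD (j+1) 0 ≤ R.getD m 0 := by
        have := hC 1 le_rfl (by omega)
        simpa using this
      exact lt_of_lt_of_le (hx ▸ jdx_chain_getD_lt hL (Nat.lt_succ_self j) hj1 0) h1
    have hR'chain : (R.insertIdx m x).Chain' (· < ·) := by
      rw [jdx_insertIdx_eq x m R hmR]
      exact jdx_chain_insert_mid hR hmR hTmx hxRm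
    have hR'ne : R.insertIdx m x ≠ [] := by
      rw [hR'rep]
      simp
    -- assemble both sides
    have lhs1 : insertWord (R ++ L) [] =
        insertWord (x :: (L2 ++ Lr)) ((Q' ++ ([] ++ T)) :: rest') := by
      rw [insertWord_append, insertWord_of_chain hR hRne]
      conv_lhs => rw [hLsplit]
      rw [insertWord_append, ← hstA, hRrep]
    have rhs1 : insertWord (R.insertIdx m x ++ L.eraseIdx j) [] =
        insertWord (L2 ++ Lr) ((Q' ++ ([] ++ x :: T)) :: rest') := by
      rw [insertWord_append, insertWord_of_chain hR'chain hR'ne]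
      conv_lhs => rw [hEsplit]
      rw [insertWord_append, ← hstB, hR'rep]
    rw [lhs1, rhs1]
    simp only [List.nil_append]
    -- case on whether the tail T is empty
    rcases eq_or_ne T [] with hTnil | hTne
    · -- e = 0
      have hmlen : R.length ≤ m := by
        have h0 : (R.drop m).length = 0 := by rw [← hTdef, hTnil]; rfl
        rw [List.length_drop] at h0
        omega
      have he0 : e = 0 := by omega
      have hL2nil : L2 = [] := by rw [hL2def, he0]; simp
      rw [hTnil, hL2nil, insertWord_cons]
      have : colInsert x ((Q' ++ []) :: rest') = (Q' ++ [x]) :: rest' := by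
        rw [List.append_nil, colInsert_of_none (colInsertCol_append_of_lt hQ'x)]
      rw [this]
    · -- e ≥ 1
      have hm_lt : m < R.length := by
        by_contra hcon
        exact hTne (by rw [hTdef]; exact List.drop_eq_nil_of_le (by omega))
      obtain ⟨z, T1, hzT⟩ := List.exists_cons_of_ne_nil hTne
      have hTcons : R.drop m = R[m]'hm_lt :: R.drop (m+1) := List.drop_eq_getElem_cons hm_lt
      have hTeq : z :: T1 = R[m]'hm_lt :: R.drop (m+1) := (hzT.symm.trans hTdef).trans hTcons
      injection hTeq with hz1 hz2
      have hzval : z = R.getD m 0 := by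
        rw [List.getD_eq_getElem R 0 hm_lt]; exact hz1
      have hT1val : T1 = R.drop (m+1) := hz2
      have hxz : x < z := hzval ▸ hxRm hm_lt
      rw [hzT, insertWord_cons,
        colInsert_of_some (colInsertCol_boundary T1 hQ'x (le_of_lt hxz))]
      -- apply phase 2
      have he1 : 1 ≤ e := by omega
      have hL2len : L2.length = e := by
        rw [hL2def, List.length_take, List.length_drop]
        omega
      have hT1len : T1.length = e - 1 := by
        rw [hT1val, List.length_drop]
        omega
      have hgetL2 : ∀ t, t < e → L2.getD t 0 = L.getD (j+1+t) 0 := by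
        intro t ht
        rw [hL2def, jdx_getD_take ht, jdx_getD_drop]
      have hcmp2 : ∀ t, t < L2.length → L2.getD t 0 ≤ (z :: T1).getD t 0 := by
        intro t ht
        have ht' : t < e := by omega
        have h1 : (z :: T1).getD t 0 = R.getD (m+t) 0 := by
          rw [← hzT, hTdef, jdx_getD_drop]
        rw [h1, hgetL2 t ht']
        have := hC (t+1) (by omega) (by omega)
        have harith1 : j + (t+1) = j+1+t := by omega
        have harith2 : m + (t+1) - 1 = m + t := by omega
        rw [harith1, harith2] at this
        exact this
      have hxL2 : ∀ l ∈ L2, x < l := by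
        intro l hl
        obtain ⟨t, ht, rfl⟩ := List.mem_iff_getElem.mp hl
        have ht' : t < e := by
          rw [hL2len] at ht
          exact ht
        have htL : j + 1 + t < L.length := by omega
        have : L2[t] = L.getD (j+1+t) 0 := by
          rw [← hgetL2 t ht', List.getD_eq_getElem L2 0 ht]
        rw [this, hx]
        exact jdx_chain_getD_lt hL (by omega) htL 0
      have hQ2 : ∀ y ∈ Q' ++ [x], ∀ l ∈ L2, y < l := by
        intro y hy l hl
        rcases List.mem_append.mp hy with h1 | h1
        · exact lt_trans (hQ'x y h1) (hxL2 l hl)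
        · have : y = x := by simpa using h1
          exact this ▸ hxL2 l hl
      have hch2 : L2.Chain' (· < ·) :=
        hL.sublist ((List.take_sublist _ _).trans (List.drop_sublist _ _))
      have hch3 : (z :: T1).Chain' (· < ·) := by
        rw [← hzT, hTdef]
        exact hR.sublist (List.drop_sublist _ _)
      have hph2 := jdx_phase2 L2 T1 (Q' ++ [x]) z rest' Lr
        (by omega) hcmp2 hQ2 hch2 hch3
      have r1 : (Q' ++ [x]) ++ T1 = Q' ++ x :: T1 := by simp
      have r2 : (Q' ++ [x]) ++ z :: T1 = Q' ++ x :: z :: T1 := by simp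
      rw [r1, r2] at hph2
      exact hph2

lemma jdx_findGreatest_prop {P : ℕ → Prop} [DecidablePred P] {c w : ℕ}
    (hw : w ≤ c) (hPw : P w) :
    P (Nat.findGreatest P c) ∧ Nat.findGreatest P c ≤ c ∧
      ∀ n, Nat.findGreatest P c < n → n ≤ c → ¬ P n := by
  obtain ⟨h1, h2, h3⟩ := (Nat.findGreatest_eq_iff (m := Nat.findGreatest P c)).mp rfl
  refine ⟨?_, h1, fun n hn hnc => h3 hn hnc⟩
  rcases Nat.eq_zero_or_pos (Nat.findGreatest P c) with h0 | hpos
  · rcases Nat.eq_zero_or_pos w with rfl | hwpos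
    · exact h0 ▸ hPw
    · exact absurd hPw (h3 (by omega) hw)
  · exact h2 (by omega)

/-- Let `U` be a semistandard tableau of shape
`λ(a,b,c) = (2^{b+c},1^a)/(1^b)` with `𝔯_U = 0` (the right column cannot be
slid down preserving semistandardness).  If `a > 0`, applying jeu de taquin to
the position below the bottom of `U^R` yields a semistandard tableau of shape
`λ(a-1,b+1,c)`; if `b > 0`, applying jeu de taquin to the position above the
top of `U^L` yields a semistandard tableau of shape `λ(a+1,b-1,c)`.  (Jeu de
taquin slides preserve the Knuth class of the column reading word, so the
resulting tableau is the semistandard filling of the stated shape that is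
Knuth equivalent to `U`.) -/
theorem jdt_two_column (a b c : ℕ) (L R : List ℕ)
    (hU : TC.Valid ⟨a, b, c, L, R⟩) (hr : resid ⟨a, b, c, L, R⟩ = 0) :
    (0 < a → ∃ L' R' : List ℕ, TC.Valid ⟨a - 1, b + 1, c, L', R'⟩ ∧
        KnuthEq (TC.word ⟨a - 1, b + 1, c, L', R'⟩) (TC.word ⟨a, b, c, L, R⟩)) ∧
    (0 < b → ∃ L' R' : List ℕ, TC.Valid ⟨a + 1, b - 1, c, L', R'⟩ ∧
        KnuthEq (TC.word ⟨a + 1, b - 1, c, L', R'⟩) (TC.word ⟨a, b, c, L, R⟩)) := by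
  have hLlen : L.length = a + c := hU.1
  have hRlen : R.length = b + c := hU.2.1
  have hLch : L.Chain' (· < ·) := hU.2.2.1
  have hRch : R.Chain' (· < ·) := hU.2.2.2.1
  have hLpos : ∀ p ∈ L, 0 < p := hU.2.2.2.2.1
  have hRpos : ∀ p ∈ R, 0 < p := hU.2.2.2.2.2.1
  have hS0 : ∀ i < c + 0, L.getD i 0 ≤ R.getD (b - 0 + i) 0 := hU.2.2.2.2.2.2
  have hS0' : ∀ i, i < c → L.getD i 0 ≤ R.getD (b + i) 0 := by
    intro i hi
    have := hS0 i (by omega)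
    simpa using this
  have hNS1 : 0 < a → 0 < b → ∃ i, i ≤ c ∧ R.getD (b - 1 + i) 0 < L.getD i 0 := by
    intro ha hb
    have h1 : ¬ SlideOK ⟨a, b, c, L, R⟩ 1 :=
      Nat.findGreatest_eq_zero_iff.mp hr (by omega) (show 1 ≤ min a b by omega)
    have h1' : ¬ ∀ i < c + 1, L.getD i 0 ≤ R.getD (b - 1 + i) 0 := h1
    push_neg at h1'
    obtain ⟨i, hi, hlt⟩ := h1'
    exact ⟨i, by omega, hlt⟩
  constructor
  · -- part 1 : a > 0
    intro ha
    set js := Nat.findGreatest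
      (fun jj => b + jj = 0 ∨ R.getD (b + jj - 1) 0 < L.getD jj 0) c with hjs
    have hwit : ∃ w, w ≤ c ∧ (b + w = 0 ∨ R.getD (b + w - 1) 0 < L.getD w 0) := by
      rcases Nat.eq_zero_or_pos b with hb0 | hb
      · exact ⟨0, Nat.zero_le c, Or.inl (by omega)⟩
      · obtain ⟨i, hi, hlt⟩ := hNS1 ha hb
        refine ⟨i, hi, Or.inr ?_⟩
        have harith : b - 1 + i = b + i - 1 := by omega
        rwa [harith] at hlt
    obtain ⟨w, hwc, hPw⟩ := hwit
    obtain ⟨hPj, hjle, hjmax'⟩ := jdx_findGreatest_prop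
      (P := fun jj => b + jj = 0 ∨ R.getD (b + jj - 1) 0 < L.getD jj 0) hwc hPw
    rw [← hjs] at hPj hjle hjmax'
    have hPj' : b + js = 0 ∨ R.getD (b + js - 1) 0 < L.getD js 0 := hPj
    have hjmax : ∀ jj, js < jj → jj ≤ c → L.getD jj 0 ≤ R.getD (b + jj - 1) 0 := by
      intro jj h1 h2
      have h3 : ¬ (b + jj = 0 ∨ R.getD (b + jj - 1) 0 < L.getD jj 0) := hjmax' jj h1 h2
      push_neg at h3
      exact h3.2
    set m := b + js with hm
    set x := L.getD js 0 with hx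
    -- facts used both in KEY and validity
    have hjsL : js < L.length := by omega
    have hTmx : ∀ y ∈ R.take m, y < x := by
      intro y hy
      obtain ⟨i, hi, rfl⟩ := List.mem_iff_getElem.mp hy
      have him : i < m := lt_of_lt_of_le hi (by simp [List.length_take])
      rw [← List.getD_eq_getElem _ 0 hi, jdx_getD_take him]
      have hmne : b + js ≠ 0 := by omega
      have hblt : R.getD (b + js - 1) 0 < x := hPj'.resolve_left hmne
      exact lt_of_le_of_lt
        (jdx_chain_getD_le hRch (show i ≤ b + js - 1 by omega)
          (show b + js - 1 < R.length by omega) 0) hblt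
    have hxRm : m < R.length → x < R.getD m 0 := by
      intro hmlt
      have hjsc : js < c := by omega
      have h1 : L.getD (js + 1) 0 ≤ R.getD (b + (js + 1) - 1) 0 :=
        hjmax (js + 1) (by omega) (by omega)
      have harith : b + (js + 1) - 1 = m := by omega
      rw [harith] at h1
      exact lt_of_lt_of_le (jdx_chain_getD_lt hLch (Nat.lt_succ_self js) (by omega) 0) h1
    have hK := jdx_key R L m js hRch hLch (by omega) (by omega) hjsL
      (by intro i hi
          have harith : m - js + i = b + i := by omega
          rw [harith]
          exact hS0' i (by omega))
      (by rcases hPj' with h0 | hlt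
          · exact Or.inl (by omega)
          · exact Or.inr (hx ▸ hlt))
      (by intro t ht1 ht2
          have h1 := hjmax (js + t) (by omega) (by omega)
          have harith : b + (js + t) - 1 = m + t - 1 := by omega
          rwa [harith] at h1)
      (by omega)
    rw [← hx] at hK
    refine ⟨L.eraseIdx js, R.insertIdx m x, ⟨?_, ?_, ?_, ?_, ?_, ?_, ?_⟩, ?_⟩
    · show (L.eraseIdx js).length = a - 1 + c
      rw [List.length_eraseIdx, if_pos hjsL]
      omega
    · show (R.insertIdx m x).length = b + 1 + c
      rw [List.length_insertIdx_of_le_length (show m ≤ R.length by omega)]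
      omega
    · exact hLch.sublist (List.eraseIdx_sublist L js)
    · show (R.insertIdx m x).Chain' (· < ·)
      rw [jdx_insertIdx_eq x m R (by omega)]
      exact jdx_chain_insert_mid hRch (by omega) hTmx hxRm
    · intro p hp
      exact hLpos p ((List.eraseIdx_sublist L js).subset hp)
    · intro p hp
      rcases (List.mem_insertIdx (by omega)).mp hp with rfl | hp'
      · refine hLpos _ ?_
        rw [hx, List.getD_eq_getElem L 0 hjsL]
        exact List.getElem_mem _
      · exact hRpos p hp'
    · show SlideOK ⟨a - 1, b + 1, c, L.eraseIdx js, R.insertIdx m x⟩ 0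
      intro i hi
      have hi' : i < c + 0 := hi
      have hic : i < c := by omega
      show (L.eraseIdx js).getD i 0 ≤ (R.insertIdx m x).getD (b + 1 - 0 + i) 0
      have harith0 : b + 1 - 0 + i = b + 1 + i := by omega
      rw [harith0]
      rcases lt_trichotomy (i + 1) js with h | h | h
      · rw [jdx_getD_eraseIdx_lt (show i < js by omega),
          jdx_getD_insertIdx_lt x (by omega) (by omega)]
        exact le_trans (hS0' i hic)
          (jdx_chain_getD_le hRch (show b + i ≤ b + 1 + i by omega) (by omega) 0)
      · have hbm : b + 1 + i = m := by omega
        rw [jdx_getD_eraseIdx_lt (show i < js by omega), hbm,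
          jdx_getD_insertIdx_self x (by omega), hx]
        exact le_of_lt (jdx_chain_getD_lt hLch (show i < js by omega) hjsL 0)
      · rw [jdx_getD_eraseIdx_ge (show js ≤ i by omega),
          jdx_getD_insertIdx_gt x (by omega) (show m < b + 1 + i by omega)]
        have harith : b + 1 + i - 1 = b + (i + 1) - 1 := by omega
        rw [harith]
        exact hjmax (i + 1) (by omega) (by omega)
    · show insertWord (R.insertIdx m x ++ L.eraseIdx js) [] = insertWord (R ++ L) []
      exact hK.symm
  · -- part 2 : b > 0
    intro hb
    have hwit : ∃ w, w ≤ c ∧ (R.getD (b + w - 1) 0 < L.getD w 0 ∨ L.length ≤ w) := by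
      rcases Nat.eq_zero_or_pos a with ha0 | ha
      · exact ⟨c, le_rfl, Or.inr (by omega)⟩
      · obtain ⟨i, hi, hlt⟩ := hNS1 ha hb
        refine ⟨i, hi, Or.inl ?_⟩
        have harith : b - 1 + i = b + i - 1 := by omega
        rwa [harith] at hlt
    obtain ⟨w, hwc, hPw⟩ := hwit
    have hex : ∃ i, R.getD (b + i - 1) 0 < L.getD i 0 ∨ L.length ≤ i := ⟨w, hPw⟩
    set is := Nat.find hex with his
    have hQi := Nat.find_spec hex
    have hisc : is ≤ c := le_trans (Nat.find_min' hex hPw) hwc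
    have hmin : ∀ i, i < is → L.getD i 0 ≤ R.getD (b + i - 1) 0 := by
      intro i hi
      have h3 := Nat.find_min hex hi
      push_neg at h3
      exact h3.1
    set q := b + is - 1 with hq
    set v := R.getD q 0 with hv
    have hq_lt : q < R.length := by omega
    have his_le_L : is ≤ L.length := by omega
    have hL'ch : (L.insertIdx is v).Chain' (· < ·) := by
      rw [jdx_insertIdx_eq v is L his_le_L]
      refine jdx_chain_insert_mid hLch his_le_L ?_ ?_
      · intro y hy
        obtain ⟨i, hi, rfl⟩ := List.mem_iff_getElem.mp hy
        have him : i < is := lt_of_lt_of_le hi (by simp [List.length_take])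
        rw [← List.getD_eq_getElem _ 0 hi, jdx_getD_take him]
        exact lt_of_le_of_lt (hmin i him)
          (jdx_chain_getD_lt hRch (show b + i - 1 < q by omega) hq_lt 0)
      · intro hisL
        rcases hQi with hlt | habs
        · exact hv ▸ hlt
        · omega
    have hR'ch : (R.eraseIdx q).Chain' (· < ·) := hRch.sublist (List.eraseIdx_sublist R q)
    have hR'len : (R.eraseIdx q).length = b + c - 1 := by
      rw [List.length_eraseIdx, if_pos hq_lt]
      omega
    have hL'len : (L.insertIdx is v).length = a + c + 1 := by
      rw [List.length_insertIdx_of_le_length his_le_L]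
      omega
    have hL'getD : (L.insertIdx is v).getD is 0 = v := jdx_getD_insertIdx_self v his_le_L
    have hK := jdx_key (R.eraseIdx q) (L.insertIdx is v) q is hR'ch hL'ch
      (by omega) (by omega) (by omega)
      (by intro i hi
          have harith : q - is + i = b - 1 + i := by omega
          rw [harith, jdx_getD_insertIdx_lt v his_le_L hi,
            jdx_getD_eraseIdx_lt (show b - 1 + i < q by omega)]
          have harith2 : b - 1 + i = b + i - 1 := by omega
          rw [harith2]
          exact hmin i hi)
      (by rcases Nat.eq_zero_or_pos q with h0 | hpos
          · exact Or.inl h0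
          · refine Or.inr ?_
            rw [hL'getD, jdx_getD_eraseIdx_lt (show q - 1 < q by omega), hv]
            exact jdx_chain_getD_lt hRch (by omega) hq_lt 0)
      (by intro t ht1 ht2
          rw [jdx_getD_insertIdx_gt v his_le_L (show is < is + t by omega),
            jdx_getD_eraseIdx_ge (show q ≤ q + t - 1 by omega)]
          have harith : q + t - 1 + 1 = b + (is + t - 1) := by omega
          have harith2 : is + t - 1 < c := by
            rw [hR'len] at ht2
            omega
          rw [harith]
          exact hS0' (is + t - 1) harith2)
      (by rw [hR'len, hL'len]; omega)
    rw [hL'getD, hv, jdx_eraseIdx_insertIdx hq_lt, List.eraseIdx_insertIdx_self, ← hv] at hK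
    refine ⟨L.insertIdx is v, R.eraseIdx q, ⟨?_, ?_, ?_, ?_, ?_, ?_, ?_⟩, ?_⟩
    · show (L.insertIdx is v).length = a + 1 + c
      rw [hL'len]; omega
    · show (R.eraseIdx q).length = b - 1 + c
      rw [hR'len]; omega
    · exact hL'ch
    · exact hR'ch
    · intro p hp
      rcases (List.mem_insertIdx his_le_L).mp hp with rfl | hp'
      · refine hRpos _ ?_
        rw [hv, List.getD_eq_getElem R 0 hq_lt]
        exact List.getElem_mem _
      · exact hLpos p hp'
    · intro p hp
      exact hRpos p ((List.eraseIdx_sublist R q).subset hp)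
    · show SlideOK ⟨a + 1, b - 1, c, L.insertIdx is v, R.eraseIdx q⟩ 0
      intro i hi
      have hi' : i < c + 0 := hi
      have hic : i < c := by omega
      show (L.insertIdx is v).getD i 0 ≤ (R.eraseIdx q).getD (b - 1 - 0 + i) 0
      have harith0 : b - 1 - 0 + i = b - 1 + i := by omega
      rw [harith0]
      rcases lt_trichotomy i is with h | h | h
      · rw [jdx_getD_insertIdx_lt v his_le_L h,
          jdx_getD_eraseIdx_lt (show b - 1 + i < q by omega)]
        have harith : b - 1 + i = b + i - 1 := by omega
        rw [harith]
        exact hmin i h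
      · rw [h, hL'getD]
        have harith : b - 1 + is = q := by omega
        rw [harith, jdx_getD_eraseIdx_ge (le_refl q), hv]
        exact jdx_chain_getD_le hRch (show q ≤ q + 1 by omega)
          (show q + 1 < R.length by omega) 0
      · rw [jdx_getD_insertIdx_gt v his_le_L h,
          jdx_getD_eraseIdx_ge (show q ≤ b - 1 + i by omega)]
        have harith : b - 1 + i + 1 = b + i := by omega
        rw [harith]
        refine le_trans (hS0' (i - 1) (by omega)) ?_
        have harith2 : b + (i - 1) ≤ b + i := by omega
        exact jdx_chain_getD_le hRch harith2 (by omega) 0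
    · show insertWord (R.eraseIdx q ++ L.insertIdx is v) [] = insertWord (R ++ L) []
      exact hK

end LRPaper
end

section
/- Let μ be a partition with at most n parts. For T in the set D_n(μ) of distinguished tableaux, the set 𝒫_T of partitions ρ with at most n parts for which T is ρ-distinguished satisfies 𝒫_T = ρ_T + 𝒫^{(2,2)}_n, where ρ_T = Σ_{i even, 1≤i≤n-1} (ε_i(T) mod 2)·ϖ_i, and 𝒫^{(2,2)}_n is the set of partitions with at most n parts that have all parts even and all column lengths even. In particular ρ_T is the unique minimal such partition. -/
namespace LRPaper

/-- `ε` of a word for the crystal operator acting on the letters `i+1, i+2`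
(the signature rule): the number of unmatched letters `i+2`. -/
def epsW (i : ℕ) (w : List ℕ) : ℕ :=
  ((List.range (w.length + 1)).map fun k =>
    (w.take k).count (i + 2) - (w.take k).count (i + 1)).foldr max 0

/-- `φ` of a word for the crystal operator acting on the letters `i+1, i+2`:
the number of unmatched letters `i+1`. -/
def phiW (i : ℕ) (w : List ℕ) : ℕ :=
  ((List.range (w.length + 1)).map fun k =>
    (w.drop k).count (i + 1) - (w.drop k).count (i + 2)).foldr max 0

/-- `ε_{i+1}(T)` for a tableau `T` of shape `μ^π`, computed on its column
reading word. -/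
def epsT (mu : List ℕ) (T : List (List ℕ)) (i : ℕ) : ℕ :=
  epsW i (colWord (piOuter mu) (piInner mu) T)

/-- `φ_{i+1}(T)` for a tableau `T` of shape `μ^π`. -/
def phiT (mu : List ℕ) (T : List (List ℕ)) (i : ℕ) : ℕ :=
  phiW i (colWord (piOuter mu) (piInner mu) T)

/-- `T ∈ SST_n(μ^π)`: a semistandard tableau of shape `μ^π` with entries in
`{1, …, n}`. -/
def InSSTn (n : ℕ) (mu : List ℕ) (T : List (List ℕ)) : Prop :=
  IsSkewSSYT (piOuter mu) (piInner mu) T ∧ ∀ x ∈ T.flatten, x ≤ n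

/-- The conjugate of a partition given as a function. -/
noncomputable def conjF (p : ℕ → ℕ) (j : ℕ) : ℕ := Nat.card {i : ℕ // j < p i}

/-- A partition with at most `n` parts, as a function. -/
def IsPartF (n : ℕ) (p : ℕ → ℕ) : Prop := Antitone p ∧ ∀ i, n ≤ i → p i = 0

/-- `T` is `ρ`-distinguished via the pair `(λ, δ)`:
`φ(T) = λ - ρ` and `ε(T) = δ - ρ`, where `λ` has at most `n` parts and all
column lengths even, and `δ` has at most `n` parts, all even.  (The `j`-th
coordinate of `Σ_i φ_i(T) ϖ_i` is `Σ_{i ≥ j} φ_i(T)`.) -/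
def IsDistinguishedWith (n : ℕ) (mu : List ℕ) (T : List (List ℕ))
    (ρ lam delta : ℕ → ℕ) : Prop :=
  IsPartF n lam ∧ (∀ j, 2 ∣ conjF lam j) ∧
  IsPartF n delta ∧ (∀ i, 2 ∣ delta i) ∧
  (∀ j < n, lam j = ρ j + ∑ i ∈ Finset.Ico j (n - 1), phiT mu T i) ∧
  (∀ j < n, delta j = ρ j + ∑ i ∈ Finset.Ico j (n - 1), epsT mu T i)

/-- `T` is `ρ`-distinguished. -/
def IsDistinguished (n : ℕ) (mu : List ℕ) (T : List (List ℕ)) (ρ : ℕ → ℕ) :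
    Prop :=
  IsPartF n ρ ∧ ∃ lam delta, IsDistinguishedWith n mu T ρ lam delta

/-- The weight `ρ_T = Σ_{i even, 1 ≤ i ≤ n-1} (ε_i(T) mod 2)·ϖ_i`, as a
function of the coordinate `j` (0-based). -/
def rhoT (n : ℕ) (mu : List ℕ) (T : List (List ℕ)) (j : ℕ) : ℕ :=
  ∑ i ∈ (Finset.Ico j (n - 1)).filter (fun i => (i + 1) % 2 = 0),
    epsT mu T i % 2

/-- `κ ∈ 𝒫^{(2,2)}_n`: a partition with at most `n` parts, all parts even and
all column lengths even. -/
def InP22 (n : ℕ) (κ : ℕ → ℕ) : Prop :=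
  IsPartF n κ ∧ (∀ i, 2 ∣ κ i) ∧ (∀ j, 2 ∣ conjF κ j)

/-- Downward induction from `n`. -/
private lemma downInd (n : ℕ) (Q : ℕ → Prop) (base : ∀ j, n ≤ j → Q j)
    (step : ∀ j, j < n → Q (j + 1) → Q j) : ∀ j, Q j := by
  have h : ∀ d j, n - j ≤ d → Q j := by
    intro d
    induction d with
    | zero => exact fun j hj => base j (by omega)
    | succ d ih =>
      intro j _
      by_cases h : n ≤ j
      · exact base j h
      · exact step j (by omega) (ih (j + 1) (by omega))
  exact fun j => h (n - j) j le_rfl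

private lemma conjF_val (f : ℕ → ℕ) (j c : ℕ) (hf : Antitone f)
    (h1 : ∀ i, i < c → j < f i) (h2 : f c ≤ j) : conjF f j = c := by
  have hset : {i : ℕ | j < f i} = ↑(Finset.Iio c) := by
    ext i
    simp only [Set.mem_setOf_eq, Finset.coe_Iio, Set.mem_Iio]
    constructor
    · intro hi
      by_contra hc
      push_neg at hc
      have := hf hc
      omega
    · exact h1 i
  calc conjF f j = ({i : ℕ | j < f i}).ncard := Nat.card_coe_set_eq _
    _ = ((Finset.Iio c : Finset ℕ) : Set ℕ).ncard := by rw [hset]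
    _ = (Finset.Iio c).card := Set.ncard_coe_finset _
    _ = c := Nat.card_Iio c

/-- For an antitone eventually-zero function, all "column lengths" are even
iff consecutive parts pair up. -/
private lemma conj_even_iff (f : ℕ → ℕ) (n : ℕ) (hf : Antitone f)
    (h0 : ∀ i, n ≤ i → f i = 0) :
    (∀ j, 2 ∣ conjF f j) ↔ ∀ k, f (2 * k) = f (2 * k + 1) := by
  constructor
  · intro h k
    by_contra hne
    have hlt : f (2 * k + 1) < f (2 * k) :=
      lt_of_le_of_ne (hf (by omega)) fun e => hne e.symm
    have hcv : conjF f (f (2 * k + 1)) = 2 * k + 1 := by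
      apply conjF_val f _ _ hf
      · intro i hi
        exact lt_of_lt_of_le hlt (hf (by omega))
      · exact le_rfl
    have := h (f (2 * k + 1))
    omega
  · intro h j
    have hex : ∃ i, f i ≤ j := ⟨n, by rw [h0 n le_rfl]; omega⟩
    have hcv : conjF f j = Nat.find hex := by
      apply conjF_val f _ _ hf
      · intro i hi
        have := Nat.find_min hex hi
        omega
      · exact Nat.find_spec hex
    rw [hcv]
    rcases Nat.even_or_odd (Nat.find hex) with he | ho
    · obtain ⟨k, hk⟩ := he; omega
    · obtain ⟨k, hk⟩ := ho
      exfalso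
      have h1 : f (Nat.find hex) ≤ j := Nat.find_spec hex
      have h2 := Nat.find_min hex (show 2 * k < Nat.find hex by omega)
      have h3 := h k
      rw [hk] at h1
      omega

/-- The characterizing conditions for `ρ`-distinguishedness. -/
@[reducible] private def Qchar (n : ℕ) (mu : List ℕ) (T : List (List ℕ))
    (ρ : ℕ → ℕ) : Prop :=
  IsPartF n ρ ∧
  (∀ j < n, 2 ∣ ρ j + ∑ i ∈ Finset.Ico j (n - 1), epsT mu T i) ∧
  (∀ k, 2 * k + 1 < n → ρ (2 * k) = ρ (2 * k + 1)) ∧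
  (∀ k, 2 * k < n → n ≤ 2 * k + 1 → ρ (2 * k) = 0) ∧
  (∀ k, 2 * k + 1 < n → phiT mu T (2 * k) = 0)

private lemma char_iff (n : ℕ) (mu : List ℕ) (T : List (List ℕ)) (ρ : ℕ → ℕ) :
    IsDistinguished n mu T ρ ↔ Qchar n mu T ρ := by
  constructor
  · rintro ⟨hρ, lam, delta, ⟨hlamA, hlamZ⟩, hlamC, ⟨hdelA, hdelZ⟩, hdelE,
      hlamEq, hdelEq⟩
    have hpl : ∀ k, lam (2 * k) = lam (2 * k + 1) :=
      (conj_even_iff lam n hlamA hlamZ).mp hlamC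
    have key : ∀ k, 2 * k + 1 < n →
        ρ (2 * k) = ρ (2 * k + 1) ∧ phiT mu T (2 * k) = 0 := by
      intro k hk
      have h1 := hpl k
      rw [hlamEq _ (by omega), hlamEq _ hk,
        Finset.sum_eq_sum_Ico_succ_bot (show 2 * k < n - 1 by omega)] at h1
      have := hρ.1 (show 2 * k ≤ 2 * k + 1 by omega)
      omega
    refine ⟨hρ, ?_, fun k hk => (key k hk).1, ?_, fun k hk => (key k hk).2⟩
    · intro j hj
      have h1 := hdelE j
      rw [hdelEq j hj] at h1
      exact h1
    · intro k h1 h2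
      have h3 := hpl k
      rw [hlamEq _ h1, hlamZ _ h2] at h3
      omega
  · rintro ⟨hρ, hpar, hpair, htail, hphi⟩
    have hmono : ∀ g : ℕ → ℕ, ∀ j,
        ∑ i ∈ Finset.Ico (j + 1) (n - 1), g i ≤ ∑ i ∈ Finset.Ico j (n - 1), g i :=
      fun g j => Finset.sum_le_sum_of_subset
        (Finset.Ico_subset_Ico (by omega) le_rfl)
    have hanti : ∀ g : ℕ → ℕ, Antitone
        (fun j => if j < n then ρ j + ∑ i ∈ Finset.Ico j (n - 1), g i else 0) := by
      intro g
      apply antitone_nat_of_succ_le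
      intro j
      by_cases h : j + 1 < n
      · simp only [if_pos h, if_pos (show j < n by omega)]
        exact Nat.add_le_add (hρ.1 (by omega)) (hmono g j)
      · simp only [if_neg h]
        exact Nat.zero_le _
    have hzero : ∀ g : ℕ → ℕ, ∀ i, n ≤ i →
        (fun j => if j < n then ρ j + ∑ i ∈ Finset.Ico j (n - 1), g i else 0) i = 0 :=
      fun g i hi => if_neg (by omega)
    refine ⟨hρ,
      (fun j => if j < n then ρ j + ∑ i ∈ Finset.Ico j (n - 1), phiT mu T i else 0),
      (fun j => if j < n then ρ j + ∑ i ∈ Finset.Ico j (n - 1), epsT mu T i else 0),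
      ⟨hanti _, hzero _⟩, ?_, ⟨hanti _, hzero _⟩, ?_, ?_, ?_⟩
    · apply (conj_even_iff _ n (hanti _) (hzero _)).mpr
      intro k
      by_cases h1 : 2 * k + 1 < n
      · simp only [if_pos (show 2 * k < n by omega), if_pos h1]
        rw [Finset.sum_eq_sum_Ico_succ_bot (show 2 * k < n - 1 by omega),
          hphi k h1, hpair k h1]
        omega
      · by_cases h2 : 2 * k < n
        · simp only [if_pos h2, if_neg h1]
          rw [htail k h2 (by omega),
            Finset.Ico_eq_empty (show ¬ 2 * k < n - 1 by omega), Finset.sum_empty]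
          omega
        · simp only [if_neg h2, if_neg (show ¬ 2 * k + 1 < n by omega)]
    · intro i
      by_cases h : i < n
      · simp only [if_pos h]
        exact hpar i h
      · simp only [if_neg h]
        exact dvd_zero 2
    · intro j hj
      simp only [if_pos hj]
    · intro j hj
      simp only [if_pos hj]


/-- Let `μ` be a partition with at most `n` parts and let
`T ∈ D_n(μ)` be a distinguished tableau.  Then the set `𝒫_T` of partitions
`ρ` (with at most `n` parts) for which `T` is `ρ`-distinguished equals
`ρ_T + 𝒫^{(2,2)}_n`, where
`ρ_T = Σ_{i even, 1≤i≤n-1} (ε_i(T) mod 2)·ϖ_i`; in particular `ρ_T` is the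
unique minimal such partition. -/
theorem distinguished_set_eq_rhoT_add_P22
    (n : ℕ) (mu : List ℕ) (hmu : IsPartition mu) (hlen : mu.length ≤ n)
    (T : List (List ℕ)) (hT : InSSTn n mu T)
    (hD : ∃ ρ, IsDistinguished n mu T ρ) :
    {ρ : ℕ → ℕ | IsDistinguished n mu T ρ} =
      {σ : ℕ → ℕ | ∃ κ, InP22 n κ ∧ σ = fun j => rhoT n mu T j + κ j} ∧
    (∀ σ : ℕ → ℕ,
      ({ρ : ℕ → ℕ | IsDistinguished n mu T ρ} =
        {ρ' : ℕ → ℕ | ∃ κ, InP22 n κ ∧ ρ' = fun j => σ j + κ j}) →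
      σ = rhoT n mu T) ∧
    (∀ ρ, IsDistinguished n mu T ρ → ∀ j, rhoT n mu T j ≤ ρ j) := by
  classical
  obtain ⟨ρ₀, h₀⟩ := hD
  obtain ⟨hρ₀, hpar₀, hpair₀, htail₀, hphi⟩ := (char_iff n mu T ρ₀).mp h₀
  have heven : ∀ k, 2 * k + 1 < n → 2 ∣ epsT mu T (2 * k) := by
    intro k hk
    have h1 := hpar₀ (2 * k) (by omega)
    have h2 := hpar₀ (2 * k + 1) hk
    have h3 := hpair₀ k hk
    rw [Finset.sum_eq_sum_Ico_succ_bot (show 2 * k < n - 1 by omega)] at h1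
    omega
  have hrT0 : ∀ j, n - 1 ≤ j → rhoT n mu T j = 0 := by
    intro j hj
    unfold rhoT
    rw [Finset.Ico_eq_empty (by omega), Finset.filter_empty, Finset.sum_empty]
  have hrTunf : ∀ j, rhoT n mu T j =
      ∑ i ∈ Finset.Ico j (n - 1),
        if (i + 1) % 2 = 0 then epsT mu T i % 2 else 0 := by
    intro j
    unfold rhoT
    rw [Finset.sum_filter]
  have hrTsplit : ∀ j, j < n - 1 → rhoT n mu T j
      = (if (j + 1) % 2 = 0 then epsT mu T j % 2 else 0) + rhoT n mu T (j + 1) := by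
    intro j hj
    rw [hrTunf j, hrTunf (j + 1), Finset.sum_eq_sum_Ico_succ_bot hj]
  have hrTpair : ∀ k, rhoT n mu T (2 * k) = rhoT n mu T (2 * k + 1) := by
    intro k
    by_cases h : 2 * k < n - 1
    · rw [hrTsplit _ h, if_neg (show ¬ (2 * k + 1) % 2 = 0 by omega), zero_add]
    · rw [hrT0 _ (by omega), hrT0 _ (by omega)]
  have hrTmono : ∀ j, rhoT n mu T (j + 1) ≤ rhoT n mu T j := by
    intro j
    by_cases h : j < n - 1
    · rw [hrTsplit _ h]
      omega
    · rw [hrT0 (j + 1) (by omega), hrT0 j (by omega)]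
  have hrTpar : ∀ j, 2 ∣ rhoT n mu T j + ∑ i ∈ Finset.Ico j (n - 1), epsT mu T i := by
    apply downInd (n - 1)
    · intro j hj
      rw [hrT0 j hj, Finset.Ico_eq_empty (by omega), Finset.sum_empty]
      omega
    · intro j hj ih
      rw [hrTsplit j hj, Finset.sum_eq_sum_Ico_succ_bot (show j < n - 1 from hj)]
      by_cases hp : (j + 1) % 2 = 0
      · rw [if_pos hp]
        omega
      · rw [if_neg hp]
        have hd : 2 ∣ epsT mu T j := by
          obtain ⟨k, hk⟩ : ∃ k, j = 2 * k := ⟨j / 2, by omega⟩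
          subst hk
          exact heven k (by omega)
        omega
  have hgap : ∀ ρ : ℕ → ℕ, Qchar n mu T ρ → ∀ j, j < n - 1 → (j + 1) % 2 = 0 →
      ¬ 2 ∣ epsT mu T j → ρ (j + 1) < ρ j := by
    intro ρ hQ j hj h1 h2
    have hp1 := hQ.2.1 j (by omega)
    have hp2 := hQ.2.1 (j + 1) (by omega)
    rw [Finset.sum_eq_sum_Ico_succ_bot (show j < n - 1 from hj)] at hp1
    have := hQ.1.1 (show j ≤ j + 1 by omega)
    omega
  have hmin : ∀ ρ : ℕ → ℕ, Qchar n mu T ρ → ∀ j, rhoT n mu T j ≤ ρ j := by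
    intro ρ hQ
    apply downInd (n - 1)
    · intro j hj
      rw [hrT0 j hj]
      omega
    · intro j hj ih
      have hmono := hQ.1.1 (show j ≤ j + 1 by omega)
      rw [hrTsplit j hj]
      by_cases h1 : (j + 1) % 2 = 0
      · rw [if_pos h1]
        by_cases h2 : 2 ∣ epsT mu T j
        · omega
        · have := hgap ρ hQ j hj h1 h2
          omega
      · rw [if_neg h1]
        omega
  have hkanti : ∀ ρ : ℕ → ℕ, Qchar n mu T ρ → ∀ j,
      ρ (j + 1) + rhoT n mu T j ≤ ρ j + rhoT n mu T (j + 1) := by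
    intro ρ hQ j
    have hmono := hQ.1.1 (show j ≤ j + 1 by omega)
    by_cases hj : j < n - 1
    · rw [hrTsplit j hj]
      by_cases h1 : (j + 1) % 2 = 0
      · rw [if_pos h1]
        by_cases h2 : 2 ∣ epsT mu T j
        · omega
        · have := hgap ρ hQ j hj h1 h2
          omega
      · rw [if_neg h1]
        omega
    · rw [hrT0 j (by omega), hrT0 (j + 1) (by omega)]
      omega
  have hiff : ∀ ρ : ℕ → ℕ, Qchar n mu T ρ ↔
      ∃ κ, InP22 n κ ∧ ρ = fun j => rhoT n mu T j + κ j := by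
    intro ρ
    constructor
    · intro hQ
      have hκA : Antitone (fun j => ρ j - rhoT n mu T j) := by
        apply antitone_nat_of_succ_le
        intro j
        have h1 := hkanti ρ hQ j
        have h2 := hmin ρ hQ j
        have h3 := hmin ρ hQ (j + 1)
        show ρ (j + 1) - rhoT n mu T (j + 1) ≤ ρ j - rhoT n mu T j
        omega
      have hκZ : ∀ i, n ≤ i → (fun j => ρ j - rhoT n mu T j) i = 0 := by
        intro i hi
        show ρ i - rhoT n mu T i = 0
        rw [hQ.1.2 i hi]
        omega
      have hκE : ∀ i, 2 ∣ ρ i - rhoT n mu T i := by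
        intro i
        by_cases h : i < n
        · have h1 := hQ.2.1 i h
          have h2 := hrTpar i
          have h3 := hmin ρ hQ i
          omega
        · rw [hQ.1.2 i (by omega), hrT0 i (by omega)]
          omega
      have hκP : ∀ k, ρ (2 * k) - rhoT n mu T (2 * k)
          = ρ (2 * k + 1) - rhoT n mu T (2 * k + 1) := by
        intro k
        rw [hrTpair k]
        by_cases h1 : 2 * k + 1 < n
        · rw [hQ.2.2.1 k h1]
        · by_cases h2 : 2 * k < n
          · rw [hQ.2.2.2.1 k h2 (by omega), hQ.1.2 (2 * k + 1) (by omega)]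
          · rw [hQ.1.2 (2 * k) (by omega), hQ.1.2 (2 * k + 1) (by omega)]
      refine ⟨fun j => ρ j - rhoT n mu T j,
        ⟨⟨hκA, hκZ⟩, hκE, (conj_even_iff _ n hκA hκZ).mpr hκP⟩, ?_⟩
      funext j
      have := hmin ρ hQ j
      show ρ j = rhoT n mu T j + (ρ j - rhoT n mu T j)
      omega
    · rintro ⟨κ, ⟨⟨hκA, hκZ⟩, hκE, hκC⟩, rfl⟩
      have hκP := (conj_even_iff κ n hκA hκZ).mp hκC
      refine ⟨⟨?_, ?_⟩, ?_, ?_, ?_, hphi⟩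
      · apply antitone_nat_of_succ_le
        intro j
        show rhoT n mu T (j + 1) + κ (j + 1) ≤ rhoT n mu T j + κ j
        have h1 := hrTmono j
        have h2 := hκA (show j ≤ j + 1 by omega)
        omega
      · intro i hi
        show rhoT n mu T i + κ i = 0
        rw [hrT0 i (by omega), hκZ i hi]
      · intro j hj
        have h1 := hrTpar j
        have h2 := hκE j
        show 2 ∣ rhoT n mu T j + κ j + ∑ i ∈ Finset.Ico j (n - 1), epsT mu T i
        omega
      · intro k hk
        show rhoT n mu T (2 * k) + κ (2 * k) = rhoT n mu T (2 * k + 1) + κ (2 * k + 1)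
        rw [hrTpair k, hκP k]
      · intro k h1 h2
        show rhoT n mu T (2 * k) + κ (2 * k) = 0
        rw [hrT0 _ (by omega), hκP k, hκZ _ (by omega)]
  have hmain : {ρ : ℕ → ℕ | IsDistinguished n mu T ρ} =
      {σ : ℕ → ℕ | ∃ κ, InP22 n κ ∧ σ = fun j => rhoT n mu T j + κ j} := by
    ext ρ
    simp only [Set.mem_setOf_eq]
    rw [char_iff n mu T ρ, hiff ρ]
  have hzero : InP22 n (fun _ => 0) := by
    refine ⟨⟨antitone_const, fun _ _ => rfl⟩, fun _ => dvd_zero 2, ?_⟩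
    intro j
    have hcv : conjF (fun _ => 0) j = 0 :=
      conjF_val _ j 0 antitone_const (fun i hi => absurd hi (by omega)) (Nat.zero_le j)
    rw [hcv]
    exact dvd_zero 2
  refine ⟨hmain, ?_, ?_⟩
  · intro σ hset
    have hrmem : (rhoT n mu T) ∈ {ρ : ℕ → ℕ | IsDistinguished n mu T ρ} := by
      rw [hmain]
      exact ⟨fun _ => 0, hzero, funext fun j => by simp⟩
    have hσmem : σ ∈ {ρ : ℕ → ℕ | IsDistinguished n mu T ρ} := by
      rw [hset]
      exact ⟨fun _ => 0, hzero, funext fun j => by simp⟩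
    rw [hset] at hrmem
    rw [hmain] at hσmem
    obtain ⟨κ₁, _, he₁⟩ := hrmem
    obtain ⟨κ₂, _, he₂⟩ := hσmem
    funext j
    have e1 := congrFun he₁ j
    have e2 := congrFun he₂ j
    omega
  · intro ρ hρd j
    exact hmin ρ ((char_iff n mu T ρ).mp hρd) j

end LRPaper
end

section
/- Let μ ∈ 𝒫(O_n) with n - 2μ'_1 ≥ 0, and let T = (T_l, …, T_1, T_0) ∈ H°(μ, n). Then for each i, exactly one of T^R_{i+1}(1) < T^L_i(a_i) or T^R_{i+1}(1) > T^L_i(a_i) holds (they are never equal). Moreover, T^R_{i+1}(1) > T^L_i(a_i) implies r_i r_{i+1} = 1, and r_i r_{i+1} = 0 implies T^R_{i+1}(1) < T^L_i(a_i). -/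
namespace LRPaper

/-- The representative of the filling with `𝔯 = 0` (right column slid down by
`𝔯_T` positions). -/
def TC.norm (T : TwoCol) : TwoCol :=
  ⟨T.a - resid T, T.b - resid T, T.c + resid T, T.L, T.R⟩

/-- The jeu de taquin operator `ℰ` of Definition 2.2: after sliding to the
representative with `𝔯 = 0`, slide into the position below the bottom of the
right column, obtaining a semistandard filling of `λ(a-1,b+1,c)`.  (The result
is characterized among semistandard fillings of the target shape by Knuth
equivalence of column reading words.) -/
noncomputable def Eop (T : TwoCol) : TwoCol :=
  Classical.epsilon fun S =>
    S.a = (TC.norm T).a - 1 ∧ S.b = (TC.norm T).b + 1 ∧ S.c = (TC.norm T).c ∧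
    TC.Valid S ∧ KnuthEq (TC.word S) (TC.word T)

/-- The jeu de taquin operator `ℱ` of Definition 2.2: after sliding to the
representative with `𝔯 = 0`, slide into the position above the top of the left
column, obtaining a semistandard filling of `λ(a+1,b-1,c)`. -/
noncomputable def Fop (T : TwoCol) : TwoCol :=
  Classical.epsilon fun S =>
    S.a = (TC.norm T).a + 1 ∧ S.b = (TC.norm T).b - 1 ∧ S.c = (TC.norm T).c ∧
    TC.Valid S ∧ KnuthEq (TC.word S) (TC.word T)

/-- Iterated `ℰ`. -/
noncomputable def EopIter : ℕ → TwoCol → TwoCol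
  | 0, T => T
  | k + 1, T => Eop (EopIter k T)

/-- The starred left column `T^{L*} = (ℱT)^L` (used when `𝔯_T = 1`). -/
noncomputable def Lstar (T : TwoCol) : List ℕ := (Fop T).L

/-- The starred right column `T^{R*} = (ℱT)^R`. -/
noncomputable def Rstar (T : TwoCol) : List ℕ := (Fop T).R

/-- `^L T`: the left column of `ℰ^a T` (resp. `ℰ^{a-1} T` when `𝔯_T = 1`). -/
noncomputable def Lup (T : TwoCol) : List ℕ := (EopIter (T.a - resid T) T).L

/-- `^R T`: the right column of `ℰ^a T` (resp. `ℰ^{a-1} T` when `𝔯_T = 1`). -/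
noncomputable def Rup (T : TwoCol) : List ℕ := (EopIter (T.a - resid T) T).R

/-- Admissibility `T ≺ S` (Definition 2.3(1)) for
`(T, S) ∈ 𝐓(a) × 𝐓(a')` with `a = T.a ≥ a' = S.a`:
(i) `ht(T^R) ≤ ht(S^L) - a' + 2𝔯_T 𝔯_S`;
(ii) `T^R(i) ≤ {}^L S(i)` if `𝔯_T 𝔯_S = 0` and `T^{R*}(i) ≤ {}^L S(i)` if
`𝔯_T 𝔯_S = 1`;
(iii) `{}^R T(i+a-a') ≤ S^L(i)` if `𝔯_T 𝔯_S = 0` and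
`{}^R T(i+a-a') ≤ S^{L*}(i)` if `𝔯_T 𝔯_S = 1`, for all applicable `i ≥ 1`
(entries counted from the bottom). -/
noncomputable def Adm (T S : TwoCol) : Prop :=
  S.a ≤ T.a ∧
  T.R.length + S.a ≤ S.L.length + 2 * resid T * resid S ∧
  (resid T * resid S = 0 →
    ∀ i, 1 ≤ i → i ≤ T.R.length → i ≤ (Lup S).length →
      ent T.R i ≤ ent (Lup S) i) ∧
  (resid T * resid S = 1 →
    ∀ i, 1 ≤ i → i ≤ (Rstar T).length → i ≤ (Lup S).length →
      ent (Rstar T) i ≤ ent (Lup S) i) ∧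
  (resid T * resid S = 0 →
    ∀ i, 1 ≤ i → i + T.a - S.a ≤ (Rup T).length → i ≤ S.L.length →
      ent (Rup T) (i + T.a - S.a) ≤ ent S.L i) ∧
  (resid T * resid S = 1 →
    ∀ i, 1 ≤ i → i + T.a - S.a ≤ (Rup T).length → i ≤ (Lstar S).length →
      ent (Rup T) (i + T.a - S.a) ≤ ent (Lstar S) i)

/-- Admissibility `T ≺ S` for `(T, S) ∈ 𝐓(a) × 𝐓^{sp}` with `S` a single
column (Remark 2.4(2)): here `a' = 𝔯_S` is the parity of `ht(S)`,
`S^L = {}^L S = S`, and `S^{L*}` is `S` with an arbitrarily large extra entry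
appended at the bottom. -/
noncomputable def AdmSpin (T : TwoCol) (S : List ℕ) : Prop :=
  S.length % 2 ≤ T.a ∧
  T.R.length + S.length % 2 ≤ S.length + 2 * resid T * (S.length % 2) ∧
  (resid T * (S.length % 2) = 0 →
    ∀ i, 1 ≤ i → i ≤ T.R.length → i ≤ S.length → ent T.R i ≤ ent S i) ∧
  (resid T * (S.length % 2) = 1 →
    ∀ i, 1 ≤ i → i ≤ (Rstar T).length → i ≤ S.length →
      ent (Rstar T) i ≤ ent S i) ∧
  (resid T * (S.length % 2) = 0 →
    ∀ i, 1 ≤ i → i + T.a - S.length % 2 ≤ (Rup T).length → i ≤ S.length →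
      ent (Rup T) (i + T.a - S.length % 2) ≤ ent S i) ∧
  (resid T * (S.length % 2) = 1 →
    ∀ i, 2 ≤ i → i + T.a - S.length % 2 ≤ (Rup T).length →
      i - 1 ≤ S.length →
      ent (Rup T) (i + T.a - S.length % 2) ≤ ent S (i - 1))

/-- Membership in `𝐓(a)`: a semistandard filling of some `λ(a,b,c)` with
`b, c` even and `𝔯 ≤ 1`. -/
def InTa (a : ℕ) (T : TwoCol) : Prop :=
  T.a = a ∧ TC.Valid T ∧ 2 ∣ T.b ∧ 2 ∣ T.c ∧ resid T ≤ 1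

/-- Membership in `𝐓^{sp+}`: a strictly increasing column of even height with
positive entries. -/
def InSpPlus (S : List ℕ) : Prop :=
  S.Chain' (· < ·) ∧ (∀ x ∈ S, 0 < x) ∧ 2 ∣ S.length

/-- Membership of `𝐓 = (T_l, …, T_1, T_0)` in the spinor model `𝐓(μ, n)` of
type `D` in the case `n - 2μ'_1 ≥ 0` : writing `n = 2l + r` with `r ∈ {0,1}`,
`Ts = [T_l, …, T_1]` is a list of `l` two-column tableaux with
`T_i ∈ 𝐓(μ_{l-i+1})` (so tails of heights `μ_1, μ_2, …` from the left), `T_0`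
is a spin column in `𝐓^{sp+}` if `n` is odd (and absent otherwise), and
adjacent components are admissible: `T_{i+1} ≺ T_i`. -/
noncomputable def InModel (mu : List ℕ) (n : ℕ) (Ts : List TwoCol)
    (T0 : List ℕ) : Prop :=
  Ts.length = n / 2 ∧
  (∀ j < Ts.length, InTa (mu.getD j 0) (Ts.getD j default)) ∧
  (∀ j, j + 1 < Ts.length → Adm (Ts.getD j default) (Ts.getD (j + 1) default)) ∧
  (n % 2 = 1 →
    InSpPlus T0 ∧ ∀ j, j + 1 = Ts.length → AdmSpin (Ts.getD j default) T0) ∧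
  (n % 2 = 0 → T0 = [])

/-- The concatenated column reading word `w(T_0)w(T_1)⋯w(T_l)` of an element
of the spinor model. -/
def modelWord (Ts : List TwoCol) (T0 : List ℕ) : List ℕ :=
  T0 ++ (Ts.reverse.map TC.word).flatten

/-- `𝐓` is an `𝔩`-highest weight element (`ẽ_i 𝐓 = 0` for all `i ≠ 0`):
equivalently, its reading word is Knuth equivalent to `H_η` for some
partition `η`. -/
def IsLHighestModel (Ts : List TwoCol) (T0 : List ℕ) : Prop :=
  ∃ eta, IsPartition eta ∧ insertWord (modelWord Ts T0) [] = Hcols eta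

/-- Condition (H1) of Definition 3.3 for a single component `T`:
`T^R = (1, 2, …, b+c-1, T^R(1))` and
`T^L = (1, 2, …, c)` above the line, with arbitrary tail. -/
def CondH1 (T : TwoCol) : Prop :=
  (∀ m, m + 1 < T.R.length → T.R.getD m 0 = m + 1) ∧
  (∀ m, m < T.c → T.L.getD m 0 = m + 1)

/-- Condition (H2) of Definition 3.3 for the component of index `j` in
`Ts = [T_l, …, T_1]` (so the right neighbour `T_{i-1}` is at index `j+1`, and
for the rightmost component the convention `c_0 = ∞`, `𝔯_0 = 0` applies). -/
def CondH2 (Ts : List TwoCol) (j : ℕ) : Prop :=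
  (resid (Ts.getD j default) = 0 →
    ent (Ts.getD j default).R 1 = (Ts.getD j default).b + (Ts.getD j default).c) ∧
  (resid (Ts.getD j default) = 1 →
    ent (Ts.getD j default).L (Ts.getD j default).a = (Ts.getD j default).c + 1 ∧
    (j + 1 = Ts.length →
      ent (Ts.getD j default).R 1 = (Ts.getD j default).b + (Ts.getD j default).c) ∧
    (j + 1 < Ts.length →
      ent (Ts.getD j default).R 1 = (Ts.getD j default).b + (Ts.getD j default).c ∨
      (Ts.getD (j + 1) default).c + 1 + resid (Ts.getD (j + 1) default) ≤
        ent (Ts.getD j default).R 1))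

/-- `𝐓 ∈ 𝐇°(μ, n)` (Definition 3.3, case `n - 2μ'_1 ≥ 0`): conditions (H0),
(H1) and (H2). -/
def InHcirc (Ts : List TwoCol) (T0 : List ℕ) : Prop :=
  (∀ k, k < T0.length → T0.getD k 0 = k + 1) ∧
  ∀ j < Ts.length, CondH1 (Ts.getD j default) ∧ CondH2 Ts j

section Helpers

open List

lemma chain_getD_lt {l : List ℕ} (h : l.Chain' (· < ·)) {i j : ℕ} (hij : i < j)
    (hj : j < l.length) : l.getD i 0 < l.getD j 0 := by
  rw [List.getD_eq_getElem _ _ (lt_trans hij hj), List.getD_eq_getElem _ _ hj]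
  exact (List.pairwise_iff_getElem.mp (List.isChain_iff_pairwise.mp h)) i j _ hj hij

lemma getD_pos_ge {l : List ℕ} (h : l.Chain' (· < ·)) (hp : ∀ x ∈ l, 0 < x) :
    ∀ i, i < l.length → i + 1 ≤ l.getD i 0 := by
  intro i
  induction i with
  | zero =>
    intro hi
    have hm : l.getD 0 0 ∈ l := by
      rw [List.getD_eq_getElem _ _ hi]; exact List.getElem_mem _
    exact hp _ hm
  | succ k ih =>
    intro hi
    have h1 := ih (lt_trans (Nat.lt_succ_self k) hi)
    have h2 := chain_getD_lt h (show k < k+1 by omega) hi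
    show k + 1 + 1 ≤ l.getD (k+1) 0
    omega

lemma getD_add_le {l : List ℕ} (h : l.Chain' (· < ·)) :
    ∀ i k, i + k < l.length → l.getD i 0 + k ≤ l.getD (i + k) 0 := by
  intro i k
  induction k with
  | zero => simp
  | succ m ih =>
    intro hlt
    have h1 := ih (by omega)
    have h2 := chain_getD_lt h (show i + m < i + (m+1) by omega) hlt
    omega

lemma mem_getD_of_lt {l : List ℕ} {i : ℕ} (h : i < l.length) : l.getD i 0 ∈ l := by
  rw [List.getD_eq_getElem _ _ h]; exact List.getElem_mem _

/-- strictly increasing positive list with `c` entries `≤ c`: the prefix is `1,…,c`. -/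
lemma prefix_range'_of_countP {l : List ℕ} {c : ℕ} (h : l.Chain' (· < ·))
    (hp : ∀ x ∈ l, 0 < x) (hc : c ≤ l.length)
    (hcnt : l.countP (fun x => decide (x ≤ c)) = c) :
    ∀ i, i < c → l.getD i 0 = i + 1 := by
  rcases Nat.eq_zero_or_pos c with hc0 | hcpos
  · omega
  have hlast : l.getD (c-1) 0 ≤ c := by
    by_contra hgt
    push_neg at hgt
    have hdrop : ∀ z ∈ l.drop (c-1), ¬ (z ≤ c) := by
      intro z hz
      obtain ⟨i, hi, hzi⟩ := List.mem_iff_getElem.mp hz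
      have hilen : c - 1 + i < l.length := by
        have := List.length_drop (i := c-1) (l := l); omega
      have hzz : z = l.getD (c-1+i) 0 := by
        rw [List.getD_eq_getElem _ _ hilen, ← List.getElem_drop (xs := l)]
        · exact hzi.symm
      have := getD_add_le h (c-1) i hilen
      omega
    have hsplit : l.countP (fun x => decide (x ≤ c)) =
        (l.take (c-1)).countP (fun x => decide (x ≤ c)) +
        (l.drop (c-1)).countP (fun x => decide (x ≤ c)) := by
      rw [← List.countP_append, List.take_append_drop]
    have hz : (l.drop (c-1)).countP (fun x => decide (x ≤ c)) = 0 := by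
      rw [List.countP_eq_zero]
      intro a ha
      simpa using hdrop a ha
    have hle : (l.take (c-1)).countP (fun x => decide (x ≤ c)) ≤ c - 1 := by
      calc _ ≤ (l.take (c-1)).length := List.countP_le_length
      _ ≤ c - 1 := by rw [List.length_take]; omega
    omega
  intro i hi
  have h1 := getD_pos_ge h hp i (by omega)
  have h2 := getD_add_le h i (c-1-i) (by omega)
  have : i + (c-1-i) = c - 1 := by omega
  rw [this] at h2
  omega

end Helpers
section Helpers2

lemma colInsertCol_perm (x : ℕ) : ∀ (col : List ℕ),
    ((colInsertCol x col).2.toList ++ (colInsertCol x col).1).Perm (x :: col) := by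
  intro col
  induction col with
  | nil => simp [colInsertCol]
  | cons y ys ih =>
    by_cases hxy : x ≤ y
    · simp only [colInsertCol, if_pos hxy, Option.toList_some]
      exact List.Perm.swap x y ys
    · simp only [colInsertCol, if_neg hxy]
      rcases hp : colInsertCol x ys with ⟨c', o⟩
      rw [hp] at ih
      cases o with
      | none =>
        simp only [Option.toList_none, List.nil_append] at ih ⊢
        exact (ih.cons y).trans (List.Perm.swap x y ys)
      | some z =>
        simp only [Option.toList_some, List.cons_append, List.nil_append] at ih ⊢
        exact ((List.Perm.swap y z c').trans (ih.cons y)).trans (List.Perm.swap x y ys)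

end Helpers2
section Helpers3

lemma colInsert_flatten_perm : ∀ (Cs : List (List ℕ)) (x : ℕ),
    ((colInsert x Cs).flatten).Perm (x :: Cs.flatten) := by
  intro Cs
  induction Cs with
  | nil => intro x; simp [colInsert]
  | cons C rest ih =>
    intro x
    have h := colInsertCol_perm x C
    rcases hp : colInsertCol x C with ⟨C', o⟩
    rw [hp] at h
    cases o with
    | none =>
      simp only [colInsert, hp, List.flatten_cons, Option.toList_none, List.nil_append] at h ⊢
      simpa using h.append_right rest.flatten
    | some y =>
      simp only [colInsert, hp, List.flatten_cons, Option.toList_some, List.cons_append,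
        List.nil_append] at h ⊢
      refine (List.Perm.append_left C' (ih y)).trans ?_
      refine (List.perm_middle).trans ?_
      simpa using h.append_right rest.flatten

lemma insertWord_flatten_perm : ∀ (w : List ℕ) (Cs : List (List ℕ)),
    ((insertWord w Cs).flatten).Perm (w ++ Cs.flatten) := by
  intro w
  induction w with
  | nil => intro Cs; simp [insertWord]
  | cons x w' ih =>
    intro Cs
    have h1 : insertWord (x :: w') Cs = insertWord w' (colInsert x Cs) := rfl
    rw [h1]
    refine (ih _).trans ?_
    refine (List.Perm.append_left w' (colInsert_flatten_perm Cs x)).trans ?_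
    exact List.perm_middle

end Helpers3
section Helpers4

lemma colInsertCol_self {x : ℕ} : ∀ {col : List ℕ}, col.Chain' (· < ·) → x ∈ col →
    colInsertCol x col = (col, some x) := by
  intro col
  induction col with
  | nil => intro _ h; simp at h
  | cons y ys ih =>
    intro hch hmem
    by_cases hxy : x ≤ y
    · have hx : x = y := by
        rcases List.mem_cons.mp hmem with h | h
        · exact h
        · have := (List.pairwise_cons.mp (List.isChain_iff_pairwise.mp hch)).1 x h
          omega
      subst hx
      simp [colInsertCol, hxy]
    · have hx : x ∈ ys := by
        rcases List.mem_cons.mp hmem with h | h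
        · omega
        · exact h
      simp [colInsertCol, hxy, ih hch.tail hx]

lemma colInsertCol_app {x : ℕ} : ∀ {col : List ℕ}, (∀ z ∈ col, z < x) →
    colInsertCol x col = (col ++ [x], none) := by
  intro col
  induction col with
  | nil => intro _; simp [colInsertCol]
  | cons y ys ih =>
    intro hall
    have hxy : ¬ x ≤ y := by have := hall y (by simp); omega
    simp [colInsertCol, hxy, ih (fun z hz => hall z (by simp [hz]))]

lemma colInsertCol_bump {x : ℕ} : ∀ {col : List ℕ}, col.Chain' (· < ·) → col ≠ [] →
    x ≤ col.getD (col.length - 1) 0 →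
    ∃ c' y, colInsertCol x col = (c', some y) ∧ x ≤ y := by
  intro col
  induction col with
  | nil => intro _ h _; exact absurd rfl h
  | cons z zs ih =>
    intro hch _ hle
    by_cases hxz : x ≤ z
    · exact ⟨x :: zs, z, by simp [colInsertCol, hxz], hxz⟩
    · have hzs : zs ≠ [] := by
        rintro rfl
        simp at hle
        omega
      have hle' : x ≤ zs.getD (zs.length - 1) 0 := by
        have hlen : (z :: zs).length - 1 = (zs.length - 1) + 1 := by
          cases zs with
          | nil => exact absurd rfl hzs
          | cons a as => simp
        rw [hlen, List.getD_cons_succ] at hle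
        exact hle
      obtain ⟨c', y, hy, hxy⟩ := ih hch.tail hzs hle'
      exact ⟨z :: c', y, by simp [colInsertCol, hxz, hy], hxy⟩

lemma colInsertCol_fst_len (x : ℕ) : ∀ (col : List ℕ),
    col.length ≤ (colInsertCol x col).1.length := by
  intro col
  induction col with
  | nil => simp [colInsertCol]
  | cons y ys ih =>
    by_cases hxy : x ≤ y
    · simp [colInsertCol, hxy]
    · simpa [colInsertCol, hxy] using ih

lemma colInsert_getD_len : ∀ (Cs : List (List ℕ)) (x i : ℕ),
    ((Cs.getD i []).length) ≤ (((colInsert x Cs).getD i []).length) := by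
  intro Cs
  induction Cs with
  | nil => intro x i; simp
  | cons C rest ih =>
    intro x i
    rcases hp : colInsertCol x C with ⟨C', o⟩
    cases o with
    | none =>
      cases i with
      | zero =>
        have := colInsertCol_fst_len x C
        rw [hp] at this
        simpa [colInsert, hp] using this
      | succ m => simp [colInsert, hp]
    | some y =>
      cases i with
      | zero =>
        have := colInsertCol_fst_len x C
        rw [hp] at this
        simpa [colInsert, hp] using this
      | succ m => simpa [colInsert, hp] using ih y m

lemma insertWord_getD_len : ∀ (w : List ℕ) (Cs : List (List ℕ)) (i : ℕ),
    (Cs.getD i []).length ≤ ((insertWord w Cs).getD i []).length := by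
  intro w
  induction w with
  | nil => intro Cs i; simp [insertWord]
  | cons x w' ih =>
    intro Cs i
    have h1 : insertWord (x :: w') Cs = insertWord w' (colInsert x Cs) := rfl
    rw [h1]
    exact le_trans (colInsert_getD_len Cs x i) (ih (colInsert x Cs) i)

lemma insertWord_appends : ∀ (v A : List ℕ) (rest : List (List ℕ)),
    (A ++ v).Chain' (· < ·) →
    insertWord v (A :: rest) = (A ++ v) :: rest := by
  intro v
  induction v with
  | nil => intro A rest _; simp [insertWord]
  | cons x v' ih =>
    intro A rest hch
    have hall : ∀ z ∈ A, z < x := by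
      intro z hz
      exact (List.pairwise_append.mp (List.isChain_iff_pairwise.mp hch)).2.2 z hz x (by simp)
    have h1 : insertWord (x :: v') (A :: rest) = insertWord v' (colInsert x (A :: rest)) := rfl
    have h2 : colInsert x (A :: rest) = (A ++ [x]) :: rest := by
      simp [colInsert, colInsertCol_app hall]
    rw [h1, h2, ih (A ++ [x]) rest (by simpa using hch)]
    simp

end Helpers4
section Helpers5

lemma chain'_range' (s n : ℕ) : (List.range' s n).Chain' (· < ·) :=
  List.isChain_iff_pairwise.mpr (List.pairwise_lt_range' (s := s) (n := n))

lemma range'_concat_one (s n : ℕ) : List.range' s n ++ [s + n] = List.range' s (n+1) := by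
  have := List.range'_concat (step := 1) (s := s) (n := n)
  simpa using this.symm

lemma ins_iota_aux (R : List ℕ) (hR : R.Chain' (· < ·)) :
    ∀ (m s : ℕ), 1 ≤ s → (∀ j, s < j → j ≤ s + m → j ∈ R) →
    insertWord (List.range' (s+1) m) [R, List.range' 1 s] = [R, List.range' 1 (s+m)] := by
  intro m
  induction m with
  | zero => intro s _ _; simp [insertWord]
  | succ m' ih =>
    intro s hs hmem
    have hr : List.range' (s+1) (m'+1) = (s+1) :: List.range' (s+2) m' := rfl
    rw [hr]
    have h1 : insertWord ((s+1) :: List.range' (s+2) m') [R, List.range' 1 s] =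
        insertWord (List.range' (s+2) m') (colInsert (s+1) [R, List.range' 1 s]) := rfl
    have hself : colInsertCol (s+1) R = (R, some (s+1)) :=
      colInsertCol_self hR (hmem (s+1) (by omega) (by omega))
    have happ : colInsertCol (s+1) (List.range' 1 s) = (List.range' 1 s ++ [s+1], none) := by
      refine colInsertCol_app ?_
      intro z hz
      have := List.mem_range'_1.mp hz
      omega
    have h2 : colInsert (s+1) [R, List.range' 1 s] = [R, List.range' 1 (s+1)] := by
      simp only [colInsert, hself, happ]
      rw [show s + 1 = s + 1 from rfl]
      congr 1
      · congr 1
        have := range'_concat_one 1 s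
        rw [Nat.add_comm 1 s] at this
        simpa using this
    rw [h1, h2]
    have h3 := ih (s+1) (by omega) (fun j h1 h2 => hmem j (by omega) (by omega))
    rw [show s+1+1 = s+2 from rfl] at h3
    have hse : s + (m'+1) = s + 1 + m' := by omega
    rw [hse]
    exact h3

lemma ins_iota (R : List ℕ) (hR : R.Chain' (· < ·)) (c : ℕ) (hc : 1 ≤ c)
    (hmem : ∀ j, 1 ≤ j → j ≤ c → j ∈ R) :
    insertWord (List.range' 1 c) [R] = [R, List.range' 1 c] := by
  have hr : List.range' 1 c = 1 :: List.range' 2 (c-1) := by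
    cases c with
    | zero => omega
    | succ m => rfl
  rw [hr]
  have h1 : insertWord (1 :: List.range' 2 (c-1)) [R] =
      insertWord (List.range' 2 (c-1)) (colInsert 1 [R]) := rfl
  have hself : colInsertCol 1 R = (R, some 1) :=
    colInsertCol_self hR (hmem 1 le_rfl hc)
  have h2 : colInsert 1 [R] = [R, [1]] := by
    simp [colInsert, hself]
  rw [h1, h2]
  have h3 := ins_iota_aux R hR (c-1) 1 le_rfl (fun j hj1 hj2 => hmem j (by omega) (by omega))
  have hr1 : List.range' 1 1 = [1] := rfl
  rw [show (1:ℕ)+1 = 2 from rfl, hr1] at h3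
  rw [show (1:ℕ) + (c-1) = c by omega] at h3
  rw [← hr]
  exact h3

lemma insertWord_append_eq (u v : List ℕ) (Cs : List (List ℕ)) :
    insertWord (u ++ v) Cs = insertWord v (insertWord u Cs) :=
  List.foldl_append

lemma insertWord_single (R : List ℕ) (hR : R.Chain' (· < ·)) (hne : R ≠ []) :
    insertWord R [] = [R] := by
  cases R with
  | nil => exact absurd rfl hne
  | cons r R' =>
    have h1 : insertWord (r :: R') [] = insertWord R' (colInsert r []) := rfl
    have h2 : colInsert r [] = [[r]] := rfl
    rw [h1, h2]
    have := insertWord_appends R' [r] [] (by simpa using hR)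
    simpa using this

/-- The key computation: inserting the word of a two-column tableau of the
special form. -/
lemma compute_insert (c : ℕ) (hc : 1 ≤ c) (ρ lam : List ℕ)
    (hch : ((List.range' 1 c ++ ρ) ++ lam).Chain' (· < ·)) :
    insertWord ((List.range' 1 c ++ ρ) ++ (List.range' 1 c ++ lam)) [] =
      [(List.range' 1 c ++ ρ) ++ lam, List.range' 1 c] := by
  set R := List.range' 1 c ++ ρ with hRdef
  have hRch : R.Chain' (· < ·) := hch.sublist (List.sublist_append_left _ _)
  have hRne : R ≠ [] := by
    have : (List.range' 1 c).length = c := List.length_range'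
    intro h
    rw [hRdef] at h
    have := congrArg List.length h
    simp [List.length_range'] at this
    omega
  rw [insertWord_append_eq, insertWord_single R hRch hRne]
  have hmem : ∀ j, 1 ≤ j → j ≤ c → j ∈ R := by
    intro j h1 h2
    exact List.mem_append.mpr (Or.inl (List.mem_range'_1.mpr ⟨h1, by omega⟩))
  rw [insertWord_append_eq, ins_iota R hRch c hc hmem]
  exact insertWord_appends lam R [List.range' 1 c] hch

end Helpers5
section Helpers6

lemma drop_entries_gt {l : List ℕ} (h : l.Chain' (· < ·)) (hp : ∀ x ∈ l, 0 < x) (c : ℕ) :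
    ∀ z ∈ l.drop c, c < z := by
  intro z hz
  obtain ⟨i, hi, hzi⟩ := List.mem_iff_getElem.mp hz
  have hilen : c + i < l.length := by
    have := List.length_drop (i := c) (l := l); omega
  have hzz : z = l.getD (c+i) 0 := by
    rw [List.getD_eq_getElem _ _ hilen, ← List.getElem_drop (xs := l)]
    exact hzi.symm
  have := getD_pos_ge h hp (c+i) hilen
  omega

lemma countP_le_c {l : List ℕ} (h : l.Chain' (· < ·)) (hp : ∀ x ∈ l, 0 < x) (c : ℕ) :
    l.countP (fun z => decide (z ≤ c)) ≤ c := by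
  have hsplit : l.countP (fun z => decide (z ≤ c)) =
      (l.take c).countP (fun z => decide (z ≤ c)) +
      (l.drop c).countP (fun z => decide (z ≤ c)) := by
    rw [← List.countP_append, List.take_append_drop]
  have hz : (l.drop c).countP (fun z => decide (z ≤ c)) = 0 := by
    rw [List.countP_eq_zero]
    intro a ha
    have := drop_entries_gt h hp c a ha
    simpa using by omega
  have hle : (l.take c).countP (fun z => decide (z ≤ c)) ≤ c := by
    calc _ ≤ (l.take c).length := List.countP_le_length
    _ ≤ c := by rw [List.length_take]; omega
  omega

lemma countP_range'_le (c m : ℕ) (hcm : c ≤ m) :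
    (List.range' 1 m).countP (fun z => decide (z ≤ c)) = c := by
  have hsplit : List.range' 1 c ++ List.range' (1+c) (m-c) = List.range' 1 m := by
    have := List.range'_append (s := 1) (m := c) (n := m-c) (step := 1)
    rw [show (1:ℕ) + c = 1 + 1 * c by omega, this, show c + (m - c) = m by omega]
  rw [← hsplit, List.countP_append]
  have h1 : (List.range' 1 c).countP (fun z => decide (z ≤ c)) = c := by
    have : (List.range' 1 c).countP (fun z => decide (z ≤ c)) = (List.range' 1 c).length :=
      List.countP_eq_length.mpr (by
        intro a ha
        have := List.mem_range'_1.mp ha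
        simpa using by omega)
    rw [this, List.length_range']
  have h2 : (List.range' (1+c) (m-c)).countP (fun z => decide (z ≤ c)) = 0 := by
    rw [List.countP_eq_zero]
    intro a ha
    have := List.mem_range'_1.mp ha
    simpa using by omega
  omega

lemma take_eq_range' {l : List ℕ} {c : ℕ} (hc : c ≤ l.length)
    (hpre : ∀ i, i < c → l.getD i 0 = i + 1) :
    l = List.range' 1 c ++ l.drop c := by
  conv_lhs => rw [← List.take_append_drop c l]
  congr 1
  apply List.ext_getElem
  · rw [List.length_take, List.length_range']; omega
  · intro n h1 h2
    have hn : n < c := by rw [List.length_take] at h1; omega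
    have hnl : n < l.length := by omega
    rw [List.getElem_take, List.getElem_range']
    have := hpre n hn
    rw [List.getD_eq_getElem _ _ hnl] at this
    omega

lemma nobump (c : ℕ) (hc : 1 ≤ c) (ρ : List ℕ) (ℓ : ℕ) (lam' : List ℕ)
    (hl : c < ℓ)
    (hRch : (List.range' 1 c ++ ρ).Chain' (· < ·))
    (M : List ℕ)
    (hins : insertWord ((List.range' 1 c ++ ρ) ++ (List.range' 1 c ++ (ℓ :: lam'))) [] =
      [M, List.range' 1 c]) :
    (List.range' 1 c ++ ρ).getD ((List.range' 1 c ++ ρ).length - 1) 0 < ℓ := by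
  by_contra hcon
  push_neg at hcon
  set R := List.range' 1 c ++ ρ with hRdef
  have hRne : R ≠ [] := by
    intro h
    have := congrArg List.length h
    simp [hRdef, List.length_range'] at this
    omega
  have hmem : ∀ j, 1 ≤ j → j ≤ c → j ∈ R := by
    intro j h1 h2
    exact List.mem_append.mpr (Or.inl (List.mem_range'_1.mpr ⟨h1, by omega⟩))
  rw [insertWord_append_eq, insertWord_single R hRch hRne,
    insertWord_append_eq, ins_iota R hRch c hc hmem] at hins
  obtain ⟨c', y, hy, hxy⟩ := colInsertCol_bump hRch hRne hcon
  have happ : colInsertCol y (List.range' 1 c) = (List.range' 1 c ++ [y], none) := by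
    refine colInsertCol_app ?_
    intro z hz
    have := List.mem_range'_1.mp hz
    omega
  have hstep : colInsert ℓ [R, List.range' 1 c] = [c', List.range' 1 c ++ [y]] := by
    simp [colInsert, hy, happ]
  have h1 : insertWord (ℓ :: lam') [R, List.range' 1 c] =
      insertWord lam' [c', List.range' 1 c ++ [y]] := by
    rw [show insertWord (ℓ :: lam') [R, List.range' 1 c] =
      insertWord lam' (colInsert ℓ [R, List.range' 1 c]) from rfl, hstep]
  rw [h1] at hins
  have hlen := insertWord_getD_len lam' [c', List.range' 1 c ++ [y]] 1
  rw [hins] at hlen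
  simp [List.length_range'] at hlen

lemma struct_of_insert (X : TwoCol) (c b : ℕ) (hc : 1 ≤ c) (hcX : X.c = c)
    (hval : TC.Valid X) (ts : List ℕ) (hts : ∀ z ∈ ts, c < z)
    (hins : insertWord (TC.word X) [] = [List.range' 1 (b+c) ++ ts, List.range' 1 c]) :
    X.L = List.range' 1 c ++ X.L.drop c ∧ X.R = List.range' 1 c ++ X.R.drop c ∧
    (∀ z ∈ X.L.drop c, c < z) ∧ (∀ z ∈ X.R.drop c, c < z) := by
  obtain ⟨hLlen, hRlen, hchL, hchR, hposL, hposR, -⟩ := hval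
  have hcb : c ≤ b + c := by omega
  have hperm := insertWord_flatten_perm (TC.word X) []
  rw [hins] at hperm
  have hperm2 : (X.R ++ X.L).Perm ((List.range' 1 (b+c) ++ ts) ++ List.range' 1 c) := by
    have := hperm.symm
    simpa [TC.word] using this
  have hcount := hperm2.countP_eq (fun z => decide (z ≤ c))
  rw [List.countP_append, List.countP_append, List.countP_append] at hcount
  have hr1 : (List.range' 1 (b+c)).countP (fun z => decide (z ≤ c)) = c :=
    countP_range'_le c (b+c) hcb
  have hr2 : ts.countP (fun z => decide (z ≤ c)) = 0 := by
    rw [List.countP_eq_zero]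
    intro a ha
    have := hts a ha
    simpa using by omega
  have hr3 : (List.range' 1 c).countP (fun z => decide (z ≤ c)) = c :=
    countP_range'_le c c le_rfl
  have hbL := countP_le_c hchL hposL c
  have hbR := countP_le_c hchR hposR c
  have hcL : X.L.countP (fun z => decide (z ≤ c)) = c := by omega
  have hcR : X.R.countP (fun z => decide (z ≤ c)) = c := by omega
  have hLc : c ≤ X.L.length := by omega
  have hRc : c ≤ X.R.length := by omega
  refine ⟨take_eq_range' hLc (prefix_range'_of_countP hchL hposL hLc hcL),
    take_eq_range' hRc (prefix_range'_of_countP hchR hposR hRc hcR),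
    drop_entries_gt hchL hposL c, drop_entries_gt hchR hposR c⟩

end Helpers6
section Helpers7

lemma getD_range' (s n i : ℕ) (h : i < n) : (List.range' s n).getD i 0 = s + i := by
  rw [List.getD_eq_getElem _ _ (by rw [List.length_range']; omega)]
  rw [List.getElem_range']
  omega

lemma chain'_append_last_lt {A B : List ℕ} {l : ℕ}
    (hA : A.Chain' (· < ·)) (hB : (l :: B).Chain' (· < ·)) (hne : A ≠ [])
    (h : A.getD (A.length - 1) 0 < l) : (A ++ l :: B).Chain' (· < ·) := by
  apply List.isChain_append.mpr
  refine ⟨hA, hB, ?_⟩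
  intro x hx y hy
  rw [List.getLast?_eq_getLast hne] at hx
  simp only [Option.mem_def, Option.some_inj] at hx
  simp only [List.head?_cons, Option.mem_def, Option.some_inj] at hy
  subst hx; subst hy
  rw [List.getLast_eq_getElem, ← List.getD_eq_getElem A 0]
  exact h

lemma range'_one_split (b c : ℕ) :
    List.range' 1 (b + c) = List.range' 1 c ++ List.range' (1+c) b := by
  have := List.range'_append (s := 1) (m := c) (n := b) (step := 1)
  rw [show (1:ℕ) + c = 1 + 1 * c by omega, this, Nat.add_comm b c]

/-- Main induction: iterated `ℰ` on a component of the special `H°` form. -/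
lemma hcirc_iter (b c : ℕ) (hc : 1 ≤ c) (ts : List ℕ) (hts : ts ≠ [])
    (hch : (List.range' 1 (b+c) ++ ts).Chain' (· < ·))
    (S : TwoCol) (hval : TC.Valid S)
    (hSa : S.a = ts.length) (hSb : S.b = b) (hSc : S.c = c)
    (hSL : S.L = List.range' 1 c ++ ts) (hSR : S.R = List.range' 1 (b+c)) :
    ∀ k, k ≤ ts.length →
      (EopIter k S).a = ts.length - k ∧ (EopIter k S).b = b + k ∧ (EopIter k S).c = c ∧
      TC.Valid (EopIter k S) ∧
      insertWord (TC.word (EopIter k S)) [] =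
        [List.range' 1 (b+c) ++ ts, List.range' 1 c] := by
  have hts_bc : ∀ z ∈ ts, b + c < z := by
    intro z hz
    have hp := List.pairwise_append.mp (List.isChain_iff_pairwise.mp hch)
    exact hp.2.2 (b+c) (List.mem_range'_1.mpr ⟨by omega, by omega⟩) z hz
  have hts_c : ∀ z ∈ ts, c < z := fun z hz => by have := hts_bc z hz; omega
  intro k
  induction k with
  | zero =>
    intro _
    have h0 : EopIter 0 S = S := rfl
    rw [h0]
    refine ⟨by rw [hSa]; omega, by rw [hSb]; omega, hSc, hval, ?_⟩
    have hw : TC.word S = (List.range' 1 c ++ List.range' (1+c) b) ++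
        (List.range' 1 c ++ ts) := by
      rw [TC.word, hSR, hSL, range'_one_split]
    rw [hw]
    have hcomp := compute_insert c hc (List.range' (1+c) b) ts
      (by rw [← range'_one_split]; exact hch)
    rw [hcomp, ← range'_one_split]
  | succ k ih =>
    intro hk1
    have hk : k ≤ ts.length := by omega
    obtain ⟨hXa, hXb, hXc, hXval, hXins⟩ := ih hk
    set X := EopIter k S with hXdef
    obtain ⟨hLlen, hRlen, hchL, hchR, hposL, hposR, hrow⟩ := hXval
    obtain ⟨hstL, hstR, hdL, hdR⟩ :=
      struct_of_insert X c b hc hXc ⟨hLlen, hRlen, hchL, hchR, hposL, hposR, hrow⟩ ts hts_c hXins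
    set lamX := X.L.drop c with hlamdef
    set rhoX := X.R.drop c with hrhodef
    have hlamlen : lamX.length = ts.length - k := by
      rw [hlamdef, List.length_drop, hLlen, hXa, hXc]; omega
    have hlampos : 0 < lamX.length := by omega
    obtain ⟨l, lam', hlam⟩ : ∃ l lam', lamX = l :: lam' := by
      cases hl : lamX with
      | nil => rw [hl] at hlampos; simp at hlampos
      | cons a as => exact ⟨a, as, rfl⟩
    have hlc : c < l := hdL l (by rw [hlam]; simp)
    have hRne : X.R ≠ [] := by
      intro h
      rw [h] at hRlen
      simp at hRlen
      omega
    have hchlam : lamX.Chain' (· < ·) := hchL.sublist (List.drop_sublist c X.L)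
    -- no-bump fact
    have hins' : insertWord ((List.range' 1 c ++ rhoX) ++
        (List.range' 1 c ++ (l :: lam'))) [] =
        [List.range' 1 (b+c) ++ ts, List.range' 1 c] := by
      rw [← hlam, ← hstR, ← hstL, ← TC.word]
      exact hXins
    have hlastR : X.R.getD (X.R.length - 1) 0 < l := by
      have := nobump c hc rhoX l lam' hlc (by rw [← hstR]; exact hchR) _ hins'
      rw [← hstR] at this
      exact this
    -- chain of X.R ++ lamX
    have hchRlam : (X.R ++ lamX).Chain' (· < ·) := by
      rw [hlam]
      exact chain'_append_last_lt hchR (hlam ▸ hchlam) hRne hlastR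
    -- computation of the insertion tableau of X
    have hcompX : insertWord (TC.word X) [] = [X.R ++ lamX, List.range' 1 c] := by
      have h := compute_insert c hc rhoX lamX (by rw [← hstR]; exact hchRlam)
      rw [← hstR, ← hstL] at h
      rw [TC.word]
      exact h
    have hMeq : X.R ++ lamX = List.range' 1 (b+c) ++ ts := by
      have := hcompX.symm.trans hXins
      exact (List.cons.injEq _ _ _ _).mp this |>.1
    -- residue of X is zero
    have hres : resid X = 0 := by
      rw [resid, Nat.findGreatest_eq_zero_iff]
      intro m hm0 hmle hSl
      have hmb : m ≤ X.b := le_trans hmle (min_le_right _ _)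
      have h1 := hSl c (by rw [hXc]; omega)
      have hLc : X.L.getD c 0 = l := by
        rw [hstL, hlam, List.getD_append_right _ _ _ _ (by rw [List.length_range']),
          List.length_range']
        simp
      have hidx : X.b - m + c ≤ X.R.length - 1 := by omega
      have hgd : X.R.getD (X.b - m + c) 0 ≤ X.R.getD (X.R.length - 1) 0 := by
        have := getD_add_le hchR (X.b - m + c) ((X.R.length - 1) - (X.b - m + c))
          (by omega)
        rw [show X.b - m + c + ((X.R.length - 1) - (X.b - m + c)) = X.R.length - 1
          by omega] at this
        omega
      rw [hLc] at h1
      omega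
    -- the witness for the jeu de taquin step
    set W : TwoCol := ⟨X.a - 1, X.b + 1, c, List.range' 1 c ++ lam', X.R ++ [l]⟩ with hWdef
    have hchW_R : W.R.Chain' (· < ·) := by
      show (X.R ++ [l]).Chain' (· < ·)
      exact chain'_append_last_lt hchR (List.isChain_singleton l) hRne hlastR
    have hchW_L : W.L.Chain' (· < ·) := by
      show (List.range' 1 c ++ lam').Chain' (· < ·)
      have hsub : (List.range' 1 c ++ lam').Sublist (List.range' 1 c ++ (l :: lam')) :=
        List.Sublist.append_left (List.sublist_cons_self l lam') _
      have hchL' : (List.range' 1 c ++ (l :: lam')).Chain' (· < ·) := by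
        rw [hstL, hlam] at hchL; exact hchL
      exact hchL'.sublist hsub
    have hposW_L : ∀ x ∈ W.L, 0 < x := by
      intro x hx
      rcases List.mem_append.mp hx with h | h
      · have := List.mem_range'_1.mp h; omega
      · exact hposL x (by rw [hstL, hlam]; exact List.mem_append.mpr (Or.inr (by simp [h])))
    have hposW_R : ∀ x ∈ W.R, 0 < x := by
      intro x hx
      rcases List.mem_append.mp hx with h | h
      · exact hposR x h
      · simp at h; omega
    have hlamlen' : lam'.length = X.a - 1 := by
      have : lamX.length = X.a := by rw [hlamdef, List.length_drop, hLlen, hXc]; omega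
      rw [hlam] at this
      simp at this
      omega
    have hWLlen : W.L.length = W.a + W.c := by
      show (List.range' 1 c ++ lam').length = (X.a - 1) + c
      rw [List.length_append, List.length_range', hlamlen']
      omega
    have hWRlen : W.R.length = W.b + W.c := by
      show (X.R ++ [l]).length = (X.b + 1) + c
      rw [List.length_append, hRlen, hXc]
      simp
      omega
    have hWb : W.b = X.b + 1 := rfl
    have hWc : W.c = c := rfl
    have hWrow : SlideOK W 0 := by
      intro i hi
      rw [hWc] at hi
      have hi' : i < c := by omega
      have hL : W.L.getD i 0 = i + 1 := by
        show (List.range' 1 c ++ lam').getD i 0 = i + 1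
        rw [List.getD_append _ _ _ _ (by rw [List.length_range']; omega),
          getD_range' 1 c i hi']
        omega
      have hidx : W.b - 0 + i < W.R.length := by
        rw [hWRlen, hWb, hWc]
        omega
      have hge := getD_pos_ge hchW_R hposW_R (W.b - 0 + i) hidx
      rw [hL]
      omega
    have hWval : TC.Valid W := ⟨hWLlen, hWRlen, hchW_L, hchW_R, hposW_L, hposW_R, hWrow⟩
    -- insertion tableau of W agrees with that of X
    have hWword : insertWord (TC.word W) [] = [X.R ++ lamX, List.range' 1 c] := by
      have hkey : (List.range' 1 c ++ (rhoX ++ [l])) = X.R ++ [l] := by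
        rw [← List.append_assoc, ← hstR]
      have hch2 : ((List.range' 1 c ++ (rhoX ++ [l])) ++ lam').Chain' (· < ·) := by
        rw [hkey, List.append_assoc, List.singleton_append, ← hlam]
        exact hchRlam
      have := compute_insert c hc (rhoX ++ [l]) lam' hch2
      rw [hkey] at this
      have hw : TC.word W = (X.R ++ [l]) ++ (List.range' 1 c ++ lam') := rfl
      rw [hw, this]
      congr 1
      rw [List.append_assoc, List.singleton_append, ← hlam]
    -- existence of the jeu de taquin step, and the epsilon specification
    have hnorm : TC.norm X = X := by
      rw [TC.norm, hres]
      simp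
    have hex : ∃ S' : TwoCol, S'.a = (TC.norm X).a - 1 ∧ S'.b = (TC.norm X).b + 1 ∧
        S'.c = (TC.norm X).c ∧ TC.Valid S' ∧ KnuthEq (TC.word S') (TC.word X) := by
      refine ⟨W, ?_, ?_, ?_, hWval, ?_⟩
      · rw [hnorm]
      · rw [hnorm]
      · rw [hnorm]; show c = X.c; rw [hXc]
      · show insertWord (TC.word W) [] = insertWord (TC.word X) []
        rw [hWword, hcompX]
    have hspec := Classical.epsilon_spec hex
    have hEop : EopIter (k+1) S = Eop X := rfl
    have hEop2 : Eop X = Classical.epsilon (fun S' : TwoCol => S'.a = (TC.norm X).a - 1 ∧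
        S'.b = (TC.norm X).b + 1 ∧ S'.c = (TC.norm X).c ∧ TC.Valid S' ∧
        KnuthEq (TC.word S') (TC.word X)) := rfl
    rw [hEop, hEop2]
    obtain ⟨h1, h2, h3, h4, h5⟩ := hspec
    have hna : (TC.norm X).a = X.a := by rw [hnorm]
    have hnb : (TC.norm X).b = X.b := by rw [hnorm]
    have hnc : (TC.norm X).c = X.c := by rw [hnorm]
    refine ⟨by rw [h1, hna, hXa]; omega, by rw [h2, hnb, hXb]; omega, by rw [h3, hnc, hXc], h4, ?_⟩
    have h5' : insertWord (TC.word (Classical.epsilon fun S' : TwoCol =>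
        S'.a = (TC.norm X).a - 1 ∧ S'.b = (TC.norm X).b + 1 ∧ S'.c = (TC.norm X).c ∧
        TC.Valid S' ∧ KnuthEq (TC.word S') (TC.word X))) [] =
        insertWord (TC.word X) [] := h5
    rw [h5', hXins]

end Helpers7
/-- **Lemma 3.4.** Let `μ ∈ 𝒫(O_n)` with `n - 2μ'_1 ≥ 0` and
`𝐓 = (T_l, …, T_1, T_0) ∈ 𝐇°(μ, n)`.  For each adjacent pair
`(T_{i+1}, T_i)` (with `a_i ≥ 1`), the entries `T^R_{i+1}(1)` and
`T^L_i(a_i)` are never equal, so exactly one of `T^R_{i+1}(1) < T^L_i(a_i)`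
and `T^R_{i+1}(1) > T^L_i(a_i)` holds.  Moreover `T^R_{i+1}(1) > T^L_i(a_i)`
implies `𝔯_i 𝔯_{i+1} = 1`, and `𝔯_i 𝔯_{i+1} = 0` implies
`T^R_{i+1}(1) < T^L_i(a_i)`. -/
theorem Hcirc_trichotomy
    (n : ℕ) (mu : List ℕ) (hmu : IsPartition mu) (hpos : 2 * mu.length ≤ n)
    (Ts : List TwoCol) (T0 : List ℕ)
    (hmem : InModel mu n Ts T0) (hH : InHcirc Ts T0)
    (j : ℕ) (hj : j + 1 < Ts.length)
    (ha : 1 ≤ (Ts.getD (j + 1) default).a) :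
    ent (Ts.getD j default).R 1 ≠
        ent (Ts.getD (j + 1) default).L (Ts.getD (j + 1) default).a ∧
    (ent (Ts.getD (j + 1) default).L (Ts.getD (j + 1) default).a <
        ent (Ts.getD j default).R 1 →
      resid (Ts.getD (j + 1) default) * resid (Ts.getD j default) = 1) ∧
    (resid (Ts.getD (j + 1) default) * resid (Ts.getD j default) = 0 →
      ent (Ts.getD j default).R 1 <
        ent (Ts.getD (j + 1) default).L (Ts.getD (j + 1) default).a) := by
  set T := Ts.getD j default with hTdef
  set S := Ts.getD (j+1) default with hSdef
  have hjlen : j < Ts.length := by omega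
  obtain ⟨hlen, hInTa, hAdm, -, -⟩ := hmem
  obtain ⟨-, hHJ⟩ := hH
  obtain ⟨hT1, hT2⟩ := hHJ j hjlen
  obtain ⟨hS1, hS2⟩ := hHJ (j+1) hj
  have hT2a : resid T = 0 → ent T.R 1 = T.b + T.c := hT2.1
  have hT2b : resid T = 1 → ent T.L T.a = T.c + 1 ∧
      (j + 1 = Ts.length → ent T.R 1 = T.b + T.c) ∧
      (j + 1 < Ts.length → ent T.R 1 = T.b + T.c ∨
        S.c + 1 + resid S ≤ ent T.R 1) := hT2.2
  have hS2a : resid S = 0 → ent S.R 1 = S.b + S.c := hS2.1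
  have hS2b : resid S = 1 → ent S.L S.a = S.c + 1 := fun h => (hS2.2 h).1
  have hS1a : ∀ m, m + 1 < S.R.length → S.R.getD m 0 = m + 1 := hS1.1
  have hS1b : ∀ m, m < S.c → S.L.getD m 0 = m + 1 := hS1.2
  obtain ⟨-, hTval, hTbe, hTce, hTr⟩ :
      (T.a = mu.getD j 0) ∧ TC.Valid T ∧ 2 ∣ T.b ∧ 2 ∣ T.c ∧ resid T ≤ 1 :=
    hInTa j hjlen
  obtain ⟨-, hSval, hSbe, hSce, hSr⟩ :
      (S.a = mu.getD (j+1) 0) ∧ TC.Valid S ∧ 2 ∣ S.b ∧ 2 ∣ S.c ∧ resid S ≤ 1 :=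
    hInTa (j+1) hj
  have hadm : Adm T S := hAdm j hj
  have hTRlen : T.R.length = T.b + T.c := hTval.2.1
  have hSLlen : S.L.length = S.a + S.c := hSval.1
  have hSRlen : S.R.length = S.b + S.c := hSval.2.1
  have hSchL : S.L.Chain' (· < ·) := hSval.2.2.1
  have hSchR : S.R.Chain' (· < ·) := hSval.2.2.2.1
  have hSposL : ∀ x ∈ S.L, 0 < x := hSval.2.2.2.2.1
  -- the entry `y = T^L_i(a_i)`
  have hyidx : S.c < S.L.length := by rw [hSLlen]; omega
  have hyy : ent S.L S.a = S.L.getD S.c 0 := by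
    rw [ent, hSLlen]
    congr 1
    omega
  have hy1 : S.c + 1 ≤ ent S.L S.a := by
    rw [hyy]
    exact getD_pos_ge hSchL hSposL S.c hyidx
  have hheight := hadm.2.1
  rw [show 2 * resid T * resid S = 2 * (resid T * resid S) by ring] at hheight
  -- the main claim
  have key1 : resid S * resid T = 0 → ent T.R 1 < ent S.L S.a := by
    intro h0
    have h0' : resid T * resid S = 0 := by rw [Nat.mul_comm]; exact h0
    have hbc : T.b + T.c ≤ S.c := by
      rw [hTRlen, hSLlen, h0'] at hheight
      omega
    by_cases hrT : resid T = 0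
    · have hx := hT2a hrT
      omega
    · have hrT1 : resid T = 1 := by omega
      have hrS0 : resid S = 0 := by
        rcases Nat.mul_eq_zero.mp h0 with h | h
        · exact h
        · omega
      obtain ⟨-, -, hdisj⟩ := hT2b hrT1
      rcases hdisj hj with hx | hx
      · omega
      · -- impossible: the bad branch
        exfalso
        rw [hrS0] at hx
        have hresT : resid T = Nat.findGreatest (fun k => SlideOK T k) (min T.a T.b) := rfl
        have hTble : resid T ≤ min T.a T.b := by
          rw [hresT]; exact Nat.findGreatest_le _
        have hTb1 : 1 ≤ T.b := by omega
        have hc1 : 1 ≤ S.c := by omega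
        set ts := S.L.drop S.c with htsdef
        have htslen : ts.length = S.a := by
          rw [htsdef, List.length_drop, hSLlen]; omega
        have htsne : ts ≠ [] := by
          intro h
          rw [h] at htslen
          simp at htslen
          omega
        have hSLeq : S.L = List.range' 1 S.c ++ ts :=
          take_eq_range' (by omega) (fun i hi => hS1b i hi)
        have htsgt : ∀ z ∈ ts, S.c < z := drop_entries_gt hSchL hSposL S.c
        -- S.R is exactly 1,…,b+c
        have hR1 : ent S.R 1 = S.b + S.c := hS2a hrS0
        have hR1' : S.R.getD (S.b + S.c - 1) 0 = S.b + S.c := by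
          rw [ent, hSRlen] at hR1
          exact hR1
        have hSReq : S.R = List.range' 1 (S.b + S.c) := by
          apply List.ext_getElem
          · rw [hSRlen, List.length_range']
          · intro i h1 h2
            rw [List.getElem_range']
            by_cases hi : i + 1 < S.b + S.c
            · have := hS1a i (by rw [hSRlen]; omega)
              rw [List.getD_eq_getElem _ _ h1] at this
              omega
            · have hieq : i = S.b + S.c - 1 := by rw [hSRlen] at h1; omega
              rw [← List.getD_eq_getElem _ _ h1, hieq, hR1']
              omega
        -- head of the tail exceeds b + c
        have hhead : S.L.getD S.c 0 = ts.getD 0 0 := by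
          rw [hSLeq, List.getD_append_right _ _ _ _ (by rw [List.length_range'])]
          rw [List.length_range']
          simp
        have hybc : S.b + S.c < S.L.getD S.c 0 := by
          by_cases hb0 : S.b = 0
          · have := getD_pos_ge hSchL hSposL S.c hyidx
            omega
          · have hnot : ¬ SlideOK S 1 := by
              intro hs
              have hrs : resid S = Nat.findGreatest (fun k => SlideOK S k)
                  (min S.a S.b) := rfl
              have : 1 ≤ resid S := by
                rw [hrs]
                exact Nat.le_findGreatest (by omega) hs
              omega
            rw [SlideOK] at hnot
            push_neg at hnot
            obtain ⟨i, hi, hgt⟩ := hnot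
            have hieq : i = S.c := by
              by_contra hne
              have hic : i < S.c := by omega
              have hLi : S.L.getD i 0 = i + 1 := hS1b i hic
              have hRi : S.R.getD (S.b - 1 + i) 0 = S.b + i := by
                rw [hSReq, getD_range' _ _ _ (by omega)]
                omega
              omega
            rw [hieq] at hgt
            have hRi : S.R.getD (S.b - 1 + S.c) 0 = S.b + S.c := by
              rw [hSReq, getD_range' _ _ _ (by omega)]
              omega
            omega
        -- assemble the chain hypothesis
        obtain ⟨t0, ts', hts0⟩ : ∃ t0 ts', ts = t0 :: ts' := by
          cases h : ts with
          | nil => exact absurd h htsne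
          | cons a as => exact ⟨a, as, rfl⟩
        have hchts : ts.Chain' (· < ·) := hSchL.sublist (List.drop_sublist _ _)
        have ht0 : S.b + S.c < t0 := by
          rw [hhead, hts0] at hybc
          simpa using hybc
        have hch : (List.range' 1 (S.b + S.c) ++ ts).Chain' (· < ·) := by
          rw [hts0]
          refine chain'_append_last_lt (chain'_range' _ _) (hts0 ▸ hchts) ?_ ?_
          · intro h
            have := congrArg List.length h
            rw [List.length_range'] at this
            simp at this
            omega
          · rw [List.length_range', getD_range' _ _ _ (by omega)]
            omega
        -- apply the induction
        have hiter := hcirc_iter S.b S.c hc1 ts htsne hch S hSval htslen.symm rfl rfl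
          hSLeq hSReq ts.length le_rfl
        obtain ⟨hfa, hfb, hfc, hfval, hfins⟩ := hiter
        set Y := EopIter ts.length S with hYdef
        obtain ⟨hYst, -, -, -⟩ :=
          struct_of_insert Y S.c S.b hc1 hfc hfval ts htsgt hfins
        have hYLlen : Y.L.length = S.c := by
          rw [hfval.1, hfa, hfc]
          omega
        have hYdrop : Y.L.drop S.c = [] := by
          apply List.eq_nil_of_length_eq_zero
          rw [List.length_drop, hYLlen]
          omega
        have hYL : Y.L = List.range' 1 S.c := by
          rw [hYst, hYdrop, List.append_nil]
        have hLup : Lup S = Y.L := by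
          rw [Lup, hrS0]
          rw [show S.a - 0 = ts.length by omega]
        have hLup1 : ent (Lup S) 1 = S.c := by
          rw [hLup, hYL, ent, List.length_range', getD_range' _ _ _ (by omega)]
          omega
        have hadm3 := hadm.2.2.1 h0' 1 le_rfl
          (by rw [hTRlen]; omega)
          (by rw [hLup, hYL, List.length_range']; omega)
        rw [hLup1] at hadm3
        omega
  have key2 : resid S * resid T = 1 → ent T.R 1 ≠ ent S.L S.a := by
    intro h1
    have hrS1 : resid S = 1 := by
      rcases Nat.le_one_iff_eq_zero_or_eq_one.mp hSr with h | h
      · rw [h] at h1; simp at h1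
      · exact h
    have hrT1 : resid T = 1 := by
      rcases Nat.le_one_iff_eq_zero_or_eq_one.mp hTr with h | h
      · rw [h] at h1; simp at h1
      · exact h
    have hyval : ent S.L S.a = S.c + 1 := hS2b hrS1
    obtain ⟨-, -, hdisj⟩ := hT2b hrT1
    rcases hdisj hj with hx | hx
    · rw [hx, hyval]
      omega
    · rw [hrS1] at hx
      omega
  have hprodle : resid S * resid T ≤ 1 := by
    calc resid S * resid T ≤ 1 * 1 := Nat.mul_le_mul hSr hTr
    _ = 1 := by norm_num
  refine ⟨?_, ?_, key1⟩
  · rcases (by omega : resid S * resid T = 0 ∨ resid S * resid T = 1) with h | h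
    · exact Nat.ne_of_lt (key1 h)
    · exact key2 h
  · intro hyx
    rcases (by omega : resid S * resid T = 0 ∨ resid S * resid T = 1) with h | h
    · have := key1 h
      omega
    · exact h

end LRPaper
end
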